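/- arXiv:2205.12786 — 4 statements merged into one kernel-verified Lean document; each statement's English description precedes it below -/
import Mathlib

section
/- For complex q with 0<|q|<1, ∑_{i,j≥0} q^{((i-j)^2+i)/2} / ((q;q)_i (q;q)_j) = 1/(q^{1/2};q)_∞^2, where q^{1/2} is a fixed square root of q. -/
open scoped BigOperators

noncomputable def qPoch (a q : ℂ) (n : ℕ) : ℂ :=
  ∏ k ∈ Finset.range n, (1 - a * q ^ k)

noncomputable def qPochInf (a q : ℂ) : ℂ :=
  ∏' k : ℕ, (1 - a * q ^ k)

namespace QQ

open Filter Finset Complex Topology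

lemma exp_le_one_sub {x m : ℝ} (hx : 0 ≤ x) (hxm : x ≤ m) (hm : m < 1) :
    Real.exp (-(x / (1 - m))) ≤ 1 - x := by
  have h1m : 0 < 1 - m := by linarith
  set t := x / (1 - m) with ht
  have ht0 : 0 ≤ t := div_nonneg hx h1m.le
  have hxt : x = t * (1 - m) := by rw [ht, div_mul_cancel₀ x h1m.ne']
  have h1 : 1 + t ≤ Real.exp t := by
    have := Real.add_one_le_exp t; linarith
  have h2 : Real.exp (-t) = (Real.exp t)⁻¹ := Real.exp_neg t
  have h3 : (Real.exp t)⁻¹ ≤ (1 + t)⁻¹ := by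
    apply inv_anti₀ (by linarith) h1
  have h4 : (1 + t)⁻¹ ≤ 1 - x := by
    rw [inv_eq_one_div, div_le_iff₀ (by linarith : (0:ℝ) < 1 + t)]
    nlinarith [mul_nonneg ht0 (sub_nonneg.2 hxm)]
  rw [h2]
  exact h3.trans h4

lemma two_choose_two (n : ℕ) : (2 * (n.choose 2) : ℤ) = n * (n - 1) := by
  induction n with
  | zero => simp
  | succ n ih =>
    rw [show (n+1).choose 2 = n.choose 1 + n.choose 2 from Nat.choose_succ_succ n 1,
      Nat.choose_one_right]
    push_cast at ih ⊢
    nlinarith [ih]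

lemma one_sub_ne {z : ℂ} (h : ‖z‖ < 1) : (1 : ℂ) - z ≠ 0 := by
  intro h0
  have : (1:ℂ) = z := by linear_combination h0
  rw [← this] at h
  simp at h

lemma one_add_ne {z : ℂ} (h : ‖z‖ < 1) : (1 : ℂ) + z ≠ 0 := by
  intro h0
  have : z = -1 := by linear_combination h0
  rw [this] at h
  simp at h

lemma one_add_zpow_ne {q : ℂ} (hq0 : q ≠ 0) (hq : ‖q‖ < 1) (m : ℤ) :
    (1 : ℂ) + q ^ m ≠ 0 := by
  intro h
  have hqm : q ^ m = -1 := by linear_combination h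
  have hn : ‖q‖ ^ m = (1:ℝ) := by
    rw [← norm_zpow, hqm]; simp
  have h0 : (0:ℝ) < ‖q‖ := norm_pos_iff.2 hq0
  have hm0 : m = 0 := by
    have hinj := zpow_right_injective₀ h0 (ne_of_lt hq)
    have : ‖q‖ ^ m = ‖q‖ ^ (0:ℤ) := by simpa using hn
    exact hinj this
  rw [hm0] at hqm
  norm_num at hqm

lemma qPoch_succ (q : ℂ) (n : ℕ) :
    qPoch q q (n + 1) = qPoch q q n * (1 - q ^ (n + 1)) := by
  rw [qPoch, qPoch, Finset.prod_range_succ]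
  ring

lemma one_sub_pow_ne {q : ℂ} (hq : ‖q‖ < 1) (n : ℕ) : (1 : ℂ) - q ^ (n + 1) ≠ 0 := by
  apply one_sub_ne
  rw [norm_pow]
  exact pow_lt_one₀ (norm_nonneg q) hq (Nat.succ_ne_zero n)

lemma qPoch_ne {q : ℂ} (hq : ‖q‖ < 1) (n : ℕ) : qPoch q q n ≠ 0 := by
  rw [qPoch, Finset.prod_ne_zero_iff]
  intro k _
  have := one_sub_pow_ne hq k
  rw [pow_succ'] at this
  exact this

lemma qPoch_norm_lower {q : ℂ} (hq : ‖q‖ < 1) (n : ℕ) :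
    Real.exp (-(‖q‖ / (1 - ‖q‖) / (1 - ‖q‖))) ≤ ‖qPoch q q n‖ := by
  have h0 : (0:ℝ) ≤ ‖q‖ := norm_nonneg q
  have h1 : (0:ℝ) < 1 - ‖q‖ := by linarith
  have hstep : ∀ k : ℕ, Real.exp (-(‖q‖ ^ (k+1) / (1 - ‖q‖))) ≤ ‖1 - q * q ^ k‖ := by
    intro k
    have hb : ‖q‖ ^ (k+1) ≤ ‖q‖ := by
      calc ‖q‖ ^ (k+1) ≤ ‖q‖ ^ 1 := pow_le_pow_of_le_one h0 hq.le (by omega)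
      _ = ‖q‖ := pow_one _
    refine (exp_le_one_sub (pow_nonneg h0 _) hb hq).trans ?_
    have : ‖q * q ^ k‖ = ‖q‖ ^ (k+1) := by
      rw [norm_mul, norm_pow, pow_succ']
    calc 1 - ‖q‖^(k+1) = ‖(1:ℂ)‖ - ‖q * q ^ k‖ := by rw [this]; simp
    _ ≤ ‖1 - q * q ^ k‖ := norm_sub_norm_le _ _
  have hprod : ∏ k ∈ range n, Real.exp (-(‖q‖ ^ (k+1) / (1 - ‖q‖))) ≤ ‖qPoch q q n‖ := by
    rw [qPoch, norm_prod]
    exact Finset.prod_le_prod (fun k _ => (Real.exp_pos _).le) (fun k _ => hstep k)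
  refine le_trans ?_ hprod
  rw [← Real.exp_sum]
  apply Real.exp_le_exp.2
  have hsum : ∑ k ∈ range n, ‖q‖ ^ (k+1) ≤ ‖q‖ / (1 - ‖q‖) := by
    have hs : Summable (fun k : ℕ => ‖q‖ ^ (k+1)) := by
      have := (summable_geometric_of_lt_one h0 hq).mul_left ‖q‖
      apply this.congr
      intro k
      rw [pow_succ']
    have hle : ∑ k ∈ range n, ‖q‖ ^ (k+1) ≤ ∑' k : ℕ, ‖q‖ ^ (k+1) :=
      Summable.sum_le_tsum _ (fun k _ => pow_nonneg h0 _) hs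
    refine hle.trans ?_
    have : ∑' k : ℕ, ‖q‖ ^ (k+1) = ‖q‖ * ∑' k : ℕ, ‖q‖ ^ k := by
      rw [← tsum_mul_left]
      congr 1; funext k; rw [pow_succ']
    rw [this, tsum_geometric_of_lt_one h0 hq]
    rw [div_eq_mul_inv]
  calc -(‖q‖ / (1 - ‖q‖) / (1 - ‖q‖)) ≤ -((∑ k ∈ range n, ‖q‖ ^ (k+1)) / (1 - ‖q‖)) := by
        apply neg_le_neg
        gcongr
  _ = ∑ x ∈ range n, -(‖q‖ ^ (x + 1) / (1 - ‖q‖)) := by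
        rw [Finset.sum_neg_distrib, Finset.sum_div]
lemma log_summable {f : ℕ → ℂ} {C ρ : ℝ} (hρ0 : 0 ≤ ρ) (hρ : ρ < 1)
    (h : ∀ k, ‖f k - 1‖ ≤ C * ρ ^ k) :
    Summable (fun k => Complex.log (f k)) := by
  have htend : Tendsto (fun k : ℕ => C * ρ ^ k) atTop (𝓝 0) := by
    have := tendsto_pow_atTop_nhds_zero_of_lt_one hρ0 hρ
    simpa using this.const_mul C
  have hev : ∀ᶠ k : ℕ in atTop, C * ρ ^ k < 1/2 := htend.eventually_lt_const (by norm_num)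
  apply Summable.of_norm_bounded_eventually_nat (g := fun k => 3/2 * (C * ρ ^ k))
  · exact ((summable_geometric_of_lt_one hρ0 hρ).mul_left C).mul_left _
  · filter_upwards [hev] with k hk
    have h1 : ‖f k - 1‖ ≤ 1/2 := (h k).trans hk.le
    have := Complex.norm_log_one_add_half_le_self (z := f k - 1) h1
    rw [show (1:ℂ) + (f k - 1) = f k by ring] at this
    exact this.trans (by nlinarith [h k, norm_nonneg (f k - 1)])

lemma tprod_aux {f : ℕ → ℂ} {C ρ : ℝ} (hρ0 : 0 ≤ ρ) (hρ : ρ < 1)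
    (h : ∀ k, ‖f k - 1‖ ≤ C * ρ ^ k) (hne : ∀ k, f k ≠ 0) :
    Multipliable f ∧ (∏' k, f k) ≠ 0 := by
  have hlog : Summable (fun k => Complex.log (f k)) := log_summable hρ0 hρ h
  have hm : Multipliable f :=
    Complex.multipliable_of_summable_log hlog
  refine ⟨hm, ?_⟩
  have h2 := Complex.cexp_tsum_eq_tprod hne hlog
  rw [← h2]
  exact Complex.exp_ne_zero _
lemma norm_one_sub_pow_ge {q : ℂ} (hq : ‖q‖ < 1) (n : ℕ) :
    1 - ‖q‖ ≤ ‖1 - q ^ (n+1)‖ := by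
  have h0 : (0:ℝ) ≤ ‖q‖ := norm_nonneg q
  have hb : ‖q ^ (n+1)‖ ≤ ‖q‖ := by
    rw [norm_pow]
    calc ‖q‖ ^ (n+1) ≤ ‖q‖ ^ 1 := pow_le_pow_of_le_one h0 hq.le (by omega)
    _ = ‖q‖ := pow_one _
  calc 1 - ‖q‖ ≤ 1 - ‖q ^ (n+1)‖ := by linarith
  _ = ‖(1:ℂ)‖ - ‖q ^ (n+1)‖ := by rw [norm_one]
  _ ≤ ‖1 - q ^ (n+1)‖ := norm_sub_norm_le _ _

lemma summable_norm_euler2 {q : ℂ} (hq : ‖q‖ < 1) (x : ℂ) :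
    Summable (fun n : ℕ => ‖q ^ (n.choose 2) * x ^ n / qPoch q q n‖) := by
  have h0 : (0:ℝ) ≤ ‖q‖ := norm_nonneg q
  have h1 : (0:ℝ) < 1 - ‖q‖ := by linarith
  have htend : Tendsto (fun n : ℕ => ‖q‖ ^ n * ‖x‖ / (1 - ‖q‖)) atTop (𝓝 0) := by
    have := ((tendsto_pow_atTop_nhds_zero_of_lt_one h0 hq).mul_const ‖x‖).div_const (1 - ‖q‖)
    simpa using this
  have hev : ∀ᶠ n : ℕ in atTop, ‖q‖ ^ n * ‖x‖ / (1 - ‖q‖) < 1/2 :=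
    htend.eventually_lt_const (by norm_num)
  apply summable_of_ratio_norm_eventually_le (r := 1/2) (by norm_num)
  filter_upwards [hev] with n hn
  have hE := qPoch_ne hq n
  have hf := one_sub_pow_ne hq n
  have key : q ^ ((n+1).choose 2) * x ^ (n+1) / qPoch q q (n+1)
      = (q ^ (n.choose 2) * x ^ n / qPoch q q n) * (q ^ n * x / (1 - q ^ (n+1))) := by
    rw [qPoch_succ, show (n+1).choose 2 = n.choose 1 + n.choose 2 from Nat.choose_succ_succ n 1,
      Nat.choose_one_right]
    field_simp
    ring
  rw [Real.norm_of_nonneg (norm_nonneg _), Real.norm_of_nonneg (norm_nonneg _), key, norm_mul]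
  have hratio : ‖q ^ n * x / (1 - q ^ (n+1))‖ ≤ 1/2 := by
    rw [norm_div, norm_mul, norm_pow]
    calc ‖q‖ ^ n * ‖x‖ / ‖1 - q ^ (n+1)‖ ≤ ‖q‖ ^ n * ‖x‖ / (1 - ‖q‖) :=
          div_le_div₀ (by positivity) le_rfl h1 (norm_one_sub_pow_ge hq n)
    _ ≤ 1/2 := hn.le
  calc ‖q ^ (n.choose 2) * x ^ n / qPoch q q n‖ * ‖q ^ n * x / (1 - q ^ (n+1))‖
      ≤ ‖q ^ (n.choose 2) * x ^ n / qPoch q q n‖ * (1/2) :=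
        mul_le_mul_of_nonneg_left hratio (norm_nonneg _)
  _ = 1/2 * ‖q ^ (n.choose 2) * x ^ n / qPoch q q n‖ := by ring

lemma summable_norm_qgauss {q : ℂ} (hq : ‖q‖ < 1) {x : ℂ} (hx : ‖x‖ < 1) :
    Summable (fun n : ℕ => ‖(∏ l ∈ range n, (1 + q ^ l)) * x ^ n / qPoch q q n‖) := by
  have h0 : (0:ℝ) ≤ ‖q‖ := norm_nonneg q
  have h1 : (0:ℝ) < 1 - ‖q‖ := by linarith
  set l : ℝ := (1 + ‖x‖)/2 with hl
  have hl1 : l < 1 := by rw [hl]; linarith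
  have htend : Tendsto (fun n : ℕ => (1 + ‖q‖ ^ n) * ‖x‖ / (1 - ‖q‖ ^ (n+1)))
      atTop (𝓝 ((1 + 0) * ‖x‖ / (1 - 0))) := by
    have hp : Tendsto (fun n : ℕ => ‖q‖ ^ n) atTop (𝓝 0) :=
      tendsto_pow_atTop_nhds_zero_of_lt_one h0 hq
    have hp1 : Tendsto (fun n : ℕ => ‖q‖ ^ (n+1)) atTop (𝓝 0) := by
      have := hp.mul_const ‖q‖
      simp only [zero_mul] at this
      apply this.congr
      intro n; rw [pow_succ]
    exact ((tendsto_const_nhds.add hp).mul_const ‖x‖).div (tendsto_const_nhds.sub hp1) (by norm_num)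
  have hev : ∀ᶠ n : ℕ in atTop, (1 + ‖q‖ ^ n) * ‖x‖ / (1 - ‖q‖ ^ (n+1)) < l := by
    apply htend.eventually_lt_const
    rw [hl]
    ring_nf
    linarith
  apply summable_of_ratio_norm_eventually_le (r := l) hl1
  filter_upwards [hev] with n hn
  have hE := qPoch_ne hq n
  have hf := one_sub_pow_ne hq n
  have key : (∏ k ∈ range (n+1), (1 + q ^ k)) * x ^ (n+1) / qPoch q q (n+1)
      = ((∏ k ∈ range n, (1 + q ^ k)) * x ^ n / qPoch q q n)
        * ((1 + q ^ n) * x / (1 - q ^ (n+1))) := by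
    rw [qPoch_succ, Finset.prod_range_succ]
    field_simp
    ring
  rw [Real.norm_of_nonneg (norm_nonneg _), Real.norm_of_nonneg (norm_nonneg _), key, norm_mul]
  have hq1 : (0:ℝ) < 1 - ‖q‖ ^ (n+1) := by
    have : ‖q‖ ^ (n+1) < 1 := pow_lt_one₀ h0 hq (by omega)
    linarith
  have hratio : ‖(1 + q ^ n) * x / (1 - q ^ (n+1))‖ ≤ l := by
    rw [norm_div, norm_mul]
    have hnum : ‖(1:ℂ) + q ^ n‖ ≤ 1 + ‖q‖ ^ n := by
      calc ‖(1:ℂ) + q ^ n‖ ≤ ‖(1:ℂ)‖ + ‖q ^ n‖ := norm_add_le _ _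
      _ = 1 + ‖q‖ ^ n := by rw [norm_one, norm_pow]
    have hden : 1 - ‖q‖ ^ (n+1) ≤ ‖1 - q ^ (n+1)‖ := by
      calc 1 - ‖q‖ ^ (n+1) = ‖(1:ℂ)‖ - ‖q ^ (n+1)‖ := by rw [norm_one, norm_pow]
      _ ≤ ‖1 - q ^ (n+1)‖ := norm_sub_norm_le _ _
    calc ‖(1:ℂ) + q ^ n‖ * ‖x‖ / ‖1 - q ^ (n+1)‖
        ≤ (1 + ‖q‖ ^ n) * ‖x‖ / (1 - ‖q‖ ^ (n+1)) := by
          apply div_le_div₀ (by positivity) (mul_le_mul_of_nonneg_right hnum (norm_nonneg x)) hq1 hden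
    _ ≤ l := hn.le
  calc ‖(∏ k ∈ range n, (1 + q ^ k)) * x ^ n / qPoch q q n‖ * ‖(1 + q ^ n) * x / (1 - q ^ (n+1))‖
      ≤ ‖(∏ k ∈ range n, (1 + q ^ k)) * x ^ n / qPoch q q n‖ * l :=
        mul_le_mul_of_nonneg_left hratio (norm_nonneg _)
  _ = l * ‖(∏ k ∈ range n, (1 + q ^ k)) * x ^ n / qPoch q q n‖ := by ring
lemma euler2 {q : ℂ} (hq0 : q ≠ 0) (hq : ‖q‖ < 1) (x : ℂ)
    (hne : ∀ k : ℕ, 1 + x * q ^ k ≠ 0) :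
    ∑' n : ℕ, q ^ (n.choose 2) * x ^ n / qPoch q q n = ∏' k : ℕ, (1 + x * q ^ k) := by
  set g : ℂ → ℂ := fun y => ∑' n : ℕ, q ^ (n.choose 2) * y ^ n / qPoch q q n with hgdef
  have hsum : ∀ y : ℂ, Summable (fun n : ℕ => q ^ (n.choose 2) * y ^ n / qPoch q q n) :=
    fun y => (summable_norm_euler2 hq y).of_norm
  -- functional equation
  have funeq : ∀ y : ℂ, g y = (1 + y) * g (q * y) := by
    intro y
    have ha := hsum y
    have hb := hsum (q * y)
    have hd : Summable (fun n : ℕ => q ^ (n.choose 2) * y ^ n / qPoch q q n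
        - q ^ (n.choose 2) * (q*y) ^ n / qPoch q q n) := ha.sub hb
    have key : ∀ n : ℕ, q ^ ((n+1).choose 2) * y ^ (n+1) / qPoch q q (n+1)
        - q ^ ((n+1).choose 2) * (q*y) ^ (n+1) / qPoch q q (n+1)
        = y * (q ^ (n.choose 2) * (q*y) ^ n / qPoch q q n) := by
      intro n
      have hE := qPoch_ne hq n
      have hf := one_sub_pow_ne hq n
      rw [qPoch_succ, show (n+1).choose 2 = n.choose 1 + n.choose 2 from Nat.choose_succ_succ n 1,
        Nat.choose_one_right]
      field_simp
      ring
    have h1 : g y - g (q*y) = y * g (q*y) := by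
      rw [hgdef]
      simp only
      rw [← Summable.tsum_sub ha hb, Summable.tsum_eq_zero_add hd]
      simp only [key]
      rw [tsum_mul_left]
      simp [qPoch]
    have := h1
    ring_nf at this ⊢
    linear_combination this
  -- iteration
  have iter : ∀ N : ℕ, g x = (∏ k ∈ range N, (1 + x * q ^ k)) * g (q ^ N * x) := by
    intro N
    induction N with
    | zero => simp
    | succ N ih =>
      rw [ih, funeq (q ^ N * x), Finset.prod_range_succ]
      ring_nf
  -- limits
  have hmult : Multipliable (fun k : ℕ => 1 + x * q ^ k) := by
    refine (tprod_aux (C := ‖x‖) (norm_nonneg q) hq ?_ hne).1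
    intro k
    rw [show (1:ℂ) + x * q ^ k - 1 = x * q ^ k by ring, norm_mul, norm_pow]
  have limP : Tendsto (fun N => ∏ k ∈ range N, (1 + x * q ^ k)) atTop
      (𝓝 (∏' k : ℕ, (1 + x * q ^ k))) := hmult.hasProd.tendsto_prod_nat
  have limG : Tendsto (fun N => g (q ^ N * x)) atTop (𝓝 1) := by
    have hT := tendsto_tsum_of_dominated_convergence (𝓕 := atTop)
      (f := fun (N : ℕ) (n : ℕ) => q ^ (n.choose 2) * (q ^ N * x) ^ n / qPoch q q n)
      (g := fun n : ℕ => if n = 0 then 1 else 0)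
      (bound := fun n : ℕ => ‖q ^ (n.choose 2) * x ^ n / qPoch q q n‖)
      (summable_norm_euler2 hq x) ?_ ?_
    · have : ∑' n : ℕ, (if n = 0 then (1:ℂ) else 0) = 1 := by
        rw [Summable.tsum_eq_zero_add]
        · simp
        · apply summable_of_finite_support
          apply Set.Finite.subset (Set.finite_singleton 0)
          intro n hn
          simp only [Function.mem_support] at hn
          by_contra h
          simp only [Set.mem_singleton_iff] at h
          rw [if_neg h] at hn
          exact hn rfl
      rwa [this] at hT
    · intro n
      match n with
      | 0 => simp [qPoch]
      | (m+1) =>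
        simp only [if_neg (Nat.succ_ne_zero m)]
        have hrw : ∀ N : ℕ, q ^ ((m+1).choose 2) * (q ^ N * x) ^ (m+1) / qPoch q q (m+1)
            = (q ^ (m+1)) ^ N * (q ^ ((m+1).choose 2) * x ^ (m+1) / qPoch q q (m+1)) := by
          intro N
          rw [mul_pow, ← pow_mul, ← pow_mul]
          rw [show N * (m+1) = (m+1) * N by ring]
          ring
        simp only [hrw]
        have : Tendsto (fun N : ℕ => (q ^ (m+1)) ^ N) atTop (𝓝 0) := by
          apply tendsto_pow_atTop_nhds_zero_of_norm_lt_one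
          rw [norm_pow]
          exact pow_lt_one₀ (norm_nonneg q) hq (Nat.succ_ne_zero m)
        simpa using this.mul_const _
    · apply Filter.Eventually.of_forall
      intro N n
      have hEpos : (0:ℝ) < ‖qPoch q q n‖ :=
        lt_of_lt_of_le (Real.exp_pos _) (qPoch_norm_lower hq n)
      simp only [norm_div, norm_mul, norm_pow]
      apply div_le_div₀ (by positivity) ?_ hEpos le_rfl
      apply mul_le_mul_of_nonneg_left ?_ (by positivity : (0:ℝ) ≤ ‖q‖ ^ n.choose 2)
      apply pow_le_pow_left₀ (by positivity)
      calc ‖q‖ ^ N * ‖x‖ ≤ 1 * ‖x‖ := by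
            apply mul_le_mul_of_nonneg_right ?_ (norm_nonneg x)
            exact pow_le_one₀ (norm_nonneg q) hq.le
      _ = ‖x‖ := one_mul _
  have limPG := limP.mul limG
  rw [mul_one] at limPG
  have hconst : Tendsto (fun _ : ℕ => g x) atTop (𝓝 (g x)) := tendsto_const_nhds
  have : g x = ∏' k : ℕ, (1 + x * q ^ k) := by
    apply tendsto_nhds_unique ?_ limPG
    apply hconst.congr
    intro N
    exact (iter N)
  exact this
lemma qgauss {q : ℂ} (hq0 : q ≠ 0) (hq : ‖q‖ < 1) {x : ℂ} (hx : ‖x‖ < 1) :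
    (∏' k : ℕ, (1 - x * q ^ k))
        * (∑' n : ℕ, (∏ l ∈ range n, (1 + q ^ l)) * x ^ n / qPoch q q n)
      = ∏' k : ℕ, (1 + x * q ^ k) := by
  set h : ℂ → ℂ := fun y => ∑' n : ℕ, (∏ l ∈ range n, (1 + q ^ l)) * y ^ n / qPoch q q n
    with hhdef
  have hsum : ∀ y : ℂ, ‖y‖ < 1 →
      Summable (fun n : ℕ => (∏ l ∈ range n, (1 + q ^ l)) * y ^ n / qPoch q q n) :=
    fun y hy => (summable_norm_qgauss hq hy).of_norm
  have funeq : ∀ y : ℂ, ‖y‖ ≤ ‖x‖ → (1 - y) * h y = (1 + y) * h (q * y) := by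
    intro y hy
    have hy1 : ‖y‖ < 1 := lt_of_le_of_lt hy hx
    have hqy1 : ‖q * y‖ < 1 := by
      rw [norm_mul]
      calc ‖q‖ * ‖y‖ ≤ 1 * ‖y‖ := mul_le_mul_of_nonneg_right hq.le (norm_nonneg y)
      _ = ‖y‖ := one_mul _
      _ < 1 := hy1
    have ha := hsum y hy1
    have hb := hsum (q*y) hqy1
    have hd := ha.sub hb
    have key : ∀ n : ℕ,
        (∏ l ∈ range (n+1), (1 + q ^ l)) * y ^ (n+1) / qPoch q q (n+1)
          - (∏ l ∈ range (n+1), (1 + q ^ l)) * (q*y) ^ (n+1) / qPoch q q (n+1)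
        = y * ((∏ l ∈ range n, (1 + q ^ l)) * y ^ n / qPoch q q n
            + (∏ l ∈ range n, (1 + q ^ l)) * (q*y) ^ n / qPoch q q n) := by
      intro n
      have hE := qPoch_ne hq n
      have hf := one_sub_pow_ne hq n
      rw [qPoch_succ, Finset.prod_range_succ]
      field_simp
      ring
    have h1 : h y - h (q*y) = y * (h y + h (q*y)) := by
      rw [hhdef]
      simp only
      rw [← Summable.tsum_sub ha hb, Summable.tsum_eq_zero_add hd]
      simp only [key]
      rw [tsum_mul_left, Summable.tsum_add ha hb]
      simp [qPoch]
    linear_combination h1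
  have iter : ∀ N : ℕ, (∏ k ∈ range N, (1 - x * q ^ k)) * h x
      = (∏ k ∈ range N, (1 + x * q ^ k)) * h (q ^ N * x) := by
    intro N
    induction N with
    | zero => simp
    | succ N ih =>
      have hyN : ‖q ^ N * x‖ ≤ ‖x‖ := by
        rw [norm_mul, norm_pow]
        calc ‖q‖ ^ N * ‖x‖ ≤ 1 * ‖x‖ :=
          mul_le_mul_of_nonneg_right (pow_le_one₀ (norm_nonneg q) hq.le) (norm_nonneg x)
        _ = ‖x‖ := one_mul _
      have hstep := funeq (q ^ N * x) hyN
      rw [show q * (q ^ N * x) = q ^ (N+1) * x by ring] at hstep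
      calc (∏ k ∈ range (N+1), (1 - x * q ^ k)) * h x
          = ((∏ k ∈ range N, (1 - x * q ^ k)) * h x) * (1 - x * q ^ N) := by
            rw [Finset.prod_range_succ]; ring
      _ = ((∏ k ∈ range N, (1 + x * q ^ k)) * h (q ^ N * x)) * (1 - x * q ^ N) := by rw [ih]
      _ = (∏ k ∈ range N, (1 + x * q ^ k)) * ((1 - (q ^ N * x)) * h (q ^ N * x)) := by ring
      _ = (∏ k ∈ range N, (1 + x * q ^ k)) * ((1 + (q ^ N * x)) * h (q ^ (N+1) * x)) := by
            rw [hstep]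
      _ = (∏ k ∈ range (N+1), (1 + x * q ^ k)) * h (q ^ (N+1) * x) := by
            rw [Finset.prod_range_succ]; ring
  have hmultm : Multipliable (fun k : ℕ => 1 - x * q ^ k) := by
    refine (tprod_aux (C := ‖x‖) (norm_nonneg q) hq ?_ ?_).1
    · intro k
      rw [show (1:ℂ) - x * q ^ k - 1 = -(x * q ^ k) by ring, norm_neg, norm_mul, norm_pow]
    · intro k
      apply one_sub_ne
      rw [norm_mul, norm_pow]
      calc ‖x‖ * ‖q‖ ^ k ≤ ‖x‖ * 1 :=
        mul_le_mul_of_nonneg_left (pow_le_one₀ (norm_nonneg q) hq.le) (norm_nonneg x)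
      _ = ‖x‖ := mul_one _
      _ < 1 := hx
  have hmultp : Multipliable (fun k : ℕ => 1 + x * q ^ k) := by
    refine (tprod_aux (C := ‖x‖) (norm_nonneg q) hq ?_ ?_).1
    · intro k
      rw [show (1:ℂ) + x * q ^ k - 1 = x * q ^ k by ring, norm_mul, norm_pow]
    · intro k
      apply one_add_ne
      rw [norm_mul, norm_pow]
      calc ‖x‖ * ‖q‖ ^ k ≤ ‖x‖ * 1 :=
        mul_le_mul_of_nonneg_left (pow_le_one₀ (norm_nonneg q) hq.le) (norm_nonneg x)
      _ = ‖x‖ := mul_one _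
      _ < 1 := hx
  have limM : Tendsto (fun N => (∏ k ∈ range N, (1 - x * q ^ k)) * h x) atTop
      (𝓝 ((∏' k : ℕ, (1 - x * q ^ k)) * h x)) :=
    hmultm.hasProd.tendsto_prod_nat.mul_const _
  have limH : Tendsto (fun N => h (q ^ N * x)) atTop (𝓝 1) := by
    have hT := tendsto_tsum_of_dominated_convergence (𝓕 := atTop)
      (f := fun (N : ℕ) (n : ℕ) => (∏ l ∈ range n, (1 + q ^ l)) * (q ^ N * x) ^ n / qPoch q q n)
      (g := fun n : ℕ => if n = 0 then 1 else 0)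
      (bound := fun n : ℕ => ‖(∏ l ∈ range n, (1 + q ^ l)) * x ^ n / qPoch q q n‖)
      (summable_norm_qgauss hq hx) ?_ ?_
    · have : ∑' n : ℕ, (if n = 0 then (1:ℂ) else 0) = 1 := by
        rw [Summable.tsum_eq_zero_add]
        · simp
        · apply summable_of_finite_support
          apply Set.Finite.subset (Set.finite_singleton 0)
          intro n hn
          simp only [Function.mem_support] at hn
          by_contra h'
          simp only [Set.mem_singleton_iff] at h'
          rw [if_neg h'] at hn
          exact hn rfl
      rwa [this] at hT
    · intro n
      match n with
      | 0 => simp [qPoch]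
      | (m+1) =>
        simp only [if_neg (Nat.succ_ne_zero m)]
        have hrw : ∀ N : ℕ,
            (∏ l ∈ range (m+1), (1 + q ^ l)) * (q ^ N * x) ^ (m+1) / qPoch q q (m+1)
            = (q ^ (m+1)) ^ N
              * ((∏ l ∈ range (m+1), (1 + q ^ l)) * x ^ (m+1) / qPoch q q (m+1)) := by
          intro N
          rw [mul_pow, ← pow_mul, ← pow_mul]
          rw [show N * (m+1) = (m+1) * N by ring]
          ring
        simp only [hrw]
        have : Tendsto (fun N : ℕ => (q ^ (m+1)) ^ N) atTop (𝓝 0) := by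
          apply tendsto_pow_atTop_nhds_zero_of_norm_lt_one
          rw [norm_pow]
          exact pow_lt_one₀ (norm_nonneg q) hq (Nat.succ_ne_zero m)
        simpa using this.mul_const _
    · apply Filter.Eventually.of_forall
      intro N n
      have hEpos : (0:ℝ) < ‖qPoch q q n‖ :=
        lt_of_lt_of_le (Real.exp_pos _) (qPoch_norm_lower hq n)
      simp only [norm_div, norm_mul, norm_pow]
      apply div_le_div₀ (by positivity) ?_ hEpos le_rfl
      apply mul_le_mul_of_nonneg_left ?_ (norm_nonneg _)
      apply pow_le_pow_left₀ (by positivity)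
      calc ‖q‖ ^ N * ‖x‖ ≤ 1 * ‖x‖ := by
            apply mul_le_mul_of_nonneg_right ?_ (norm_nonneg x)
            exact pow_le_one₀ (norm_nonneg q) hq.le
      _ = ‖x‖ := one_mul _
  have limR : Tendsto (fun N => (∏ k ∈ range N, (1 + x * q ^ k)) * h (q ^ N * x)) atTop
      (𝓝 ((∏' k : ℕ, (1 + x * q ^ k)) * 1)) :=
    hmultp.hasProd.tendsto_prod_nat.mul limH
  have := tendsto_nhds_unique (limM.congr (fun N => iter N)) limR
  rw [mul_one] at this
  exact this
lemma one_add_pow_ne {q : ℂ} (hq : ‖q‖ < 1) (m : ℕ) : (1:ℂ) + q ^ m ≠ 0 := by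
  cases m with
  | zero => norm_num
  | succ n =>
    apply one_add_ne
    rw [norm_pow]
    exact pow_lt_one₀ (norm_nonneg q) hq (Nat.succ_ne_zero n)

lemma prod_identity {q r : ℂ} (hq0 : q ≠ 0) (hq : ‖q‖ < 1) (hr : r ^ 2 = q) (hr0 : r ≠ 0)
    (hrn : ‖r‖ < 1) :
    (∏' k : ℕ, (1 + q * q ^ k)) * ((∏' k : ℕ, (1 + r * q ^ k)) * (∏' k : ℕ, (1 - r * q ^ k)))
      = 1 := by
  have h0 : (0:ℝ) ≤ ‖q‖ := norm_nonneg q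
  have hP : Multipliable (fun k : ℕ => 1 + q * q ^ k) := by
    refine (tprod_aux (C := ‖q‖) h0 hq ?_ ?_).1
    · intro k
      rw [show (1:ℂ) + q * q ^ k - 1 = q * q ^ k by ring, norm_mul, norm_pow]
    · intro k
      rw [← pow_succ']
      exact one_add_pow_ne hq (k+1)
  have hN1 : Multipliable (fun k : ℕ => 1 - q * q ^ k) := by
    refine (tprod_aux (C := ‖q‖) h0 hq ?_ ?_).1
    · intro k
      rw [show (1:ℂ) - q * q ^ k - 1 = -(q * q ^ k) by ring, norm_neg, norm_mul, norm_pow]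
    · intro k
      rw [← pow_succ']
      exact one_sub_pow_ne hq k
  have hObound : ∀ k : ℕ, ‖(1:ℂ) - q ^ (2*k+1) - 1‖ ≤ ‖q‖ * ‖q‖ ^ k := by
    intro k
    rw [show (1:ℂ) - q ^ (2*k+1) - 1 = -(q ^ (2*k+1)) by ring, norm_neg, norm_pow, ← pow_succ']
    exact pow_le_pow_of_le_one h0 hq.le (by omega)
  have hEVbound : ∀ k : ℕ, ‖(1:ℂ) - q ^ (2*k+2) - 1‖ ≤ ‖q‖ * ‖q‖ ^ k := by
    intro k
    rw [show (1:ℂ) - q ^ (2*k+2) - 1 = -(q ^ (2*k+2)) by ring, norm_neg, norm_pow, ← pow_succ']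
    exact pow_le_pow_of_le_one h0 hq.le (by omega)
  have hO : Multipliable (fun k : ℕ => 1 - q ^ (2*k+1)) :=
    (tprod_aux (C := ‖q‖) h0 hq hObound
      (fun k => by rw [show 2*k+1 = (2*k)+1 by ring]; exact one_sub_pow_ne hq (2*k))).1
  have hEVfull := tprod_aux (C := ‖q‖) h0 hq hEVbound
      (fun k => by rw [show 2*k+2 = (2*k+1)+1 by ring]; exact one_sub_pow_ne hq (2*k+1))
  have hEV : Multipliable (fun k : ℕ => 1 - q ^ (2*k+2)) := hEVfull.1
  have hEVne : (∏' k : ℕ, (1 - q ^ (2*k+2))) ≠ 0 := hEVfull.2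
  have hPp : Multipliable (fun k : ℕ => 1 + r * q ^ k) := by
    refine (tprod_aux (C := ‖r‖) h0 hq ?_ ?_).1
    · intro k
      rw [show (1:ℂ) + r * q ^ k - 1 = r * q ^ k by ring, norm_mul, norm_pow]
    · intro k
      apply one_add_ne
      rw [norm_mul, norm_pow]
      calc ‖r‖ * ‖q‖ ^ k ≤ ‖r‖ * 1 :=
        mul_le_mul_of_nonneg_left (pow_le_one₀ h0 hq.le) (norm_nonneg r)
      _ = ‖r‖ := mul_one _
      _ < 1 := hrn
  have hNr : Multipliable (fun k : ℕ => 1 - r * q ^ k) := by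
    refine (tprod_aux (C := ‖r‖) h0 hq ?_ ?_).1
    · intro k
      rw [show (1:ℂ) - r * q ^ k - 1 = -(r * q ^ k) by ring, norm_neg, norm_mul, norm_pow]
    · intro k
      apply one_sub_ne
      rw [norm_mul, norm_pow]
      calc ‖r‖ * ‖q‖ ^ k ≤ ‖r‖ * 1 :=
        mul_le_mul_of_nonneg_left (pow_le_one₀ h0 hq.le) (norm_nonneg r)
      _ = ‖r‖ := mul_one _
      _ < 1 := hrn
  -- parity merge
  have hOEV : (∏' k : ℕ, (1 - q ^ (2*k+1))) * (∏' k : ℕ, (1 - q ^ (2*k+2)))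
      = ∏' m : ℕ, (1 - q * q ^ m) := by
    have hcongr1 : (fun k : ℕ => 1 - q * q ^ (2*k)) = (fun k : ℕ => 1 - q ^ (2*k+1)) := by
      funext k; rw [← pow_succ']
    have hcongr2 : (fun k : ℕ => 1 - q * q ^ (2*k+1)) = (fun k : ℕ => 1 - q ^ (2*k+2)) := by
      funext k; rw [← pow_succ']
    have he : Multipliable (fun k : ℕ => (1:ℂ) - q * q ^ (2*k)) := by
      rw [hcongr1]; exact hO
    have ho : Multipliable (fun k : ℕ => (1:ℂ) - q * q ^ (2*k+1)) := by
      rw [hcongr2]; exact hEV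
    have := tprod_even_mul_odd (f := fun m : ℕ => 1 - q * q ^ m) he ho
    rw [← this]
    congr 1
    · exact tprod_congr (fun k => by show (1:ℂ) - q ^ (2*k+1) = 1 - q * q ^ (2*k); rw [pow_succ'])
    · exact tprod_congr (fun k => by
        show (1:ℂ) - q ^ (2*k+2) = 1 - q * q ^ (2*k+1)
        rw [show 2*k+2 = (2*k+1)+1 by ring, pow_succ'])
  -- P * N1 = EV
  have hPN1 : (∏' k : ℕ, (1 + q * q ^ k)) * (∏' k : ℕ, (1 - q * q ^ k))
      = ∏' k : ℕ, (1 - q ^ (2*k+2)) := by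
    rw [← Multipliable.tprod_mul hP hN1]
    exact tprod_congr (fun k => by ring)
  -- Pp * Nr = O
  have hPpNr : (∏' k : ℕ, (1 + r * q ^ k)) * (∏' k : ℕ, (1 - r * q ^ k))
      = ∏' k : ℕ, (1 - q ^ (2*k+1)) := by
    rw [← Multipliable.tprod_mul hPp hNr]
    refine tprod_congr (fun k => ?_)
    linear_combination (-(q^k)^2) * hr
  rw [hPpNr]
  -- goal : P * O = 1
  have hm : (∏' k : ℕ, (1 + q * q ^ k)) * (∏' k : ℕ, (1 - q ^ (2*k+1)))
      * (∏' k : ℕ, (1 - q ^ (2*k+2)))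
      = 1 * (∏' k : ℕ, (1 - q ^ (2*k+2))) := by
    calc (∏' k : ℕ, (1 + q * q ^ k)) * (∏' k : ℕ, (1 - q ^ (2*k+1)))
          * (∏' k : ℕ, (1 - q ^ (2*k+2)))
        = (∏' k : ℕ, (1 + q * q ^ k)) * ((∏' k : ℕ, (1 - q ^ (2*k+1)))
          * (∏' k : ℕ, (1 - q ^ (2*k+2)))) := by ring
    _ = (∏' k : ℕ, (1 + q * q ^ k)) * (∏' m : ℕ, (1 - q * q ^ m)) := by rw [hOEV]
    _ = ∏' k : ℕ, (1 - q ^ (2*k+2)) := hPN1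
    _ = 1 * (∏' k : ℕ, (1 - q ^ (2*k+2))) := (one_mul _).symm
  exact mul_right_cancel₀ hEVne hm
end QQ

open QQ Filter Finset Complex Topology in
theorem stmt_2 (q r : ℂ) (hq0 : q ≠ 0) (hq : ‖q‖ < 1) (hr : r ^ 2 = q) :
    ∑' p : ℕ × ℕ,
      r ^ ((((p.1 : ℤ) - p.2) ^ 2 + p.1)) /
        (qPoch q q p.1 * qPoch q q p.2)
      = 1 / (qPochInf r q) ^ 2 := by
  have hr0 : r ≠ 0 := by
    intro h
    apply hq0
    rw [← hr, h]
    ring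
  have hrn : ‖r‖ < 1 := by
    have h2 : ‖r‖ ^ 2 = ‖q‖ := by rw [← norm_pow, hr]
    nlinarith [norm_nonneg r]
  have h0 : (0:ℝ) ≤ ‖q‖ := norm_nonneg q
  set F : ℕ × ℕ → ℂ :=
    fun p => r ^ ((((p.1 : ℤ) - p.2) ^ 2 + p.1)) / (qPoch q q p.1 * qPoch q q p.2) with hF
  -- summability
  have hEpos : ∀ n, (0:ℝ) < ‖qPoch q q n‖ :=
    fun n => lt_of_lt_of_le (Real.exp_pos _) (qPoch_norm_lower hq n)
  set c : ℝ := Real.exp (-(‖q‖ / (1 - ‖q‖) / (1 - ‖q‖))) with hc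
  have hc0 : (0:ℝ) < c := Real.exp_pos _
  have hcE : ∀ n, c ≤ ‖qPoch q q n‖ := qPoch_norm_lower hq
  set s : ℝ := Real.sqrt ‖r‖ with hs
  have hs0 : (0:ℝ) ≤ s := Real.sqrt_nonneg _
  have hs2 : s ^ 2 = ‖r‖ := Real.sq_sqrt (norm_nonneg r)
  have hs1 : s < 1 := by nlinarith [Real.sqrt_nonneg ‖r‖]
  have hFb : ∀ p : ℕ × ℕ, ‖F p‖ ≤ (s ^ p.1 * s ^ p.2) / (c * c) := by
    rintro ⟨i, j⟩
    have he0 : (0:ℤ) ≤ ((i : ℤ) - j) ^ 2 + i := by positivity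
    obtain ⟨m, hm⟩ := Int.eq_ofNat_of_zero_le he0
    have h2m : i + j ≤ 2 * m := by
      have h1 : ((i:ℤ) + j) ≤ 2 * (((i : ℤ) - j) ^ 2 + i) := by
        rcases le_or_gt 0 ((i:ℤ) - j) with h | h
        · nlinarith [sq_nonneg ((i:ℤ) - j)]
        · nlinarith [mul_nonneg (by linarith : (0:ℤ) ≤ -((i:ℤ) - j))
            (by linarith : (0:ℤ) ≤ -(2 * ((i:ℤ) - j) + 1))]
      rw [hm] at h1
      exact_mod_cast h1
    have hnorm : ‖F (i, j)‖ = ‖r‖ ^ m / (‖qPoch q q i‖ * ‖qPoch q q j‖) := by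
      rw [hF]
      simp only
      rw [norm_div, norm_mul, hm, zpow_natCast, norm_pow]
    rw [hnorm]
    apply div_le_div₀ (by positivity) ?_ (by positivity) ?_
    · calc ‖r‖ ^ m = (s ^ 2) ^ m := by rw [hs2]
      _ = s ^ (2 * m) := by rw [← pow_mul]
      _ ≤ s ^ (i + j) := pow_le_pow_of_le_one hs0 hs1.le h2m
      _ = s ^ i * s ^ j := pow_add s i j
    · exact mul_le_mul (hcE i) (hcE j) hc0.le (norm_nonneg _)
  have hgsum : Summable (fun p : ℕ × ℕ => (s ^ p.1 * s ^ p.2) / (c * c)) := by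
    apply Summable.div_const
    exact Summable.mul_of_nonneg (summable_geometric_of_lt_one hs0 hs1)
      (summable_geometric_of_lt_one hs0 hs1) (fun i => by positivity) (fun j => by positivity)
  have hFsum : Summable F := Summable.of_norm_bounded hgsum hFb
  -- Fubini
  have hswap : ∑' p : ℕ × ℕ, F p = ∑' j : ℕ, ∑' i : ℕ, F (i, j) := by
    have h1 : ∑' p : ℕ × ℕ, F p.swap = ∑' p : ℕ × ℕ, F p := by
      have := (Equiv.prodComm ℕ ℕ).tsum_eq F
      rw [← this]
      rfl
    rw [← h1, Summable.tsum_prod hFsum.prod_symm]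
    rfl
  -- global products
  set PP : ℂ := ∏' k : ℕ, (1 + q * q ^ k) with hPP
  have hPPmult : Multipliable (fun k : ℕ => 1 + q * q ^ k) := by
    refine (tprod_aux (C := ‖q‖) h0 hq ?_ ?_).1
    · intro k
      rw [show (1:ℂ) + q * q ^ k - 1 = q * q ^ k by ring, norm_mul, norm_pow]
    · intro k
      rw [← pow_succ']
      exact one_add_pow_ne hq (k+1)
  set PPp : ℂ := ∏' k : ℕ, (1 + r * q ^ k) with hPPp
  set NN : ℂ := ∏' k : ℕ, (1 - r * q ^ k) with hNN
  have hNNfull := tprod_aux (f := fun k : ℕ => 1 - r * q ^ k) (C := ‖r‖) h0 hq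
    (fun k => by
      rw [show (1:ℂ) - r * q ^ k - 1 = -(r * q ^ k) by ring, norm_neg, norm_mul, norm_pow])
    (fun k => by
      apply one_sub_ne
      rw [norm_mul, norm_pow]
      calc ‖r‖ * ‖q‖ ^ k ≤ ‖r‖ * 1 :=
        mul_le_mul_of_nonneg_left (pow_le_one₀ h0 hq.le) (norm_nonneg r)
      _ = ‖r‖ := mul_one _
      _ < 1 := hrn)
  have hNNne : NN ≠ 0 := hNNfull.2
  -- inner sum evaluation
  have inner : ∀ j : ℕ, ∑' i : ℕ, F (i, j)
      = PP * ((∏ l ∈ range j, (1 + q ^ l)) * r ^ j / qPoch q q j) := by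
    intro j
    set x : ℂ := q ^ ((1:ℤ) - j) with hxdef
    have hxne : ∀ k : ℕ, (1:ℂ) + x * q ^ k ≠ 0 := by
      intro k
      have hxq : x * q ^ k = q ^ ((1:ℤ) - j + k) := by
        rw [hxdef, ← zpow_natCast q k, ← zpow_add₀ hq0]
      rw [hxq]
      exact one_add_zpow_ne hq0 hq _
    have hqr : ∀ z : ℤ, q ^ z = r ^ (2 * z) := by
      intro z
      rw [← hr, show (r ^ 2 : ℂ) = r ^ ((2:ℕ) : ℤ) from (zpow_natCast r 2).symm]
      rw [← zpow_mul]
      norm_num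
    have claim1 : ∀ i : ℕ, r ^ ((((i:ℤ) - j) ^ 2 + i))
        = r ^ (j ^ 2) * (q ^ (i.choose 2) * x ^ i) := by
      intro i
      have hC := two_choose_two i
      have hx_pow : x ^ i = r ^ (2 * (((1:ℤ) - j) * i)) := by
        rw [hxdef, ← zpow_natCast (q ^ ((1:ℤ) - j)) i, ← zpow_mul, hqr]
      have hqC : q ^ (i.choose 2) = r ^ (2 * ((i.choose 2 : ℕ) : ℤ)) := by
        rw [← zpow_natCast q (i.choose 2), hqr]
      have hrj : r ^ (j ^ 2) = r ^ (((j ^ 2 : ℕ)) : ℤ) := (zpow_natCast r (j ^ 2)).symm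
      rw [hx_pow, hqC, hrj, ← zpow_add₀ hr0, ← zpow_add₀ hr0]
      congr 1
      push_cast
      push_cast at hC
      linear_combination (-1 : ℤ) * hC
    have claim2 : ∀ i : ℕ, F (i, j)
        = (r ^ (j ^ 2) / qPoch q q j) * (q ^ (i.choose 2) * x ^ i / qPoch q q i) := by
      intro i
      rw [hF]
      simp only
      rw [claim1 i]
      ring
    have hinner1 : ∑' i : ℕ, F (i, j)
        = (r ^ (j ^ 2) / qPoch q q j) * ∑' i : ℕ, q ^ (i.choose 2) * x ^ i / qPoch q q i := by
      rw [← tsum_mul_left]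
      exact tsum_congr claim2
    rw [hinner1, euler2 hq0 hq x hxne]
    -- split the product
    have hxq' : ∀ k : ℕ, x * q ^ (k + j) = q * q ^ k := by
      intro k
      rw [hxdef, ← zpow_natCast q (k + j), ← zpow_add₀ hq0]
      rw [show (1:ℤ) - (j:ℤ) + ((k + j : ℕ) : ℤ) = 1 + (k:ℤ) by push_cast; ring]
      rw [zpow_add₀ hq0, zpow_one, zpow_natCast]
    have htailmult : Multipliable (fun k : ℕ => (1:ℂ) + x * q ^ (k + j)) :=
      hPPmult.congr (fun k => by rw [hxq' k])
    have hsplit := Multipliable.prod_mul_tprod_nat_mul' (f := fun k : ℕ => 1 + x * q ^ k) (k := j) htailmult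
    have htail : ∏' k : ℕ, (1 + x * q ^ (k + j)) = PP := by
      apply tprod_congr
      intro k
      rw [hxq' k]
    have hhead : ∏ k ∈ range j, (1 + x * q ^ k)
        = (q⁻¹) ^ (∑ k ∈ range j, k) * ∏ l ∈ range j, (1 + q ^ l) := by
      rw [← Finset.prod_range_reflect (fun k => 1 + x * q ^ k) j]
      have hterm : ∀ k ∈ range j, (1:ℂ) + x * q ^ (j - 1 - k) = (q⁻¹) ^ k * (1 + q ^ k) := by
        intro k hk
        rw [mem_range] at hk
        have hcast : ((j - 1 - k : ℕ) : ℤ) = (j:ℤ) - 1 - k := by omega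
        have hxq : x * q ^ (j - 1 - k) = q ^ (-(k:ℤ)) := by
          rw [hxdef, ← zpow_natCast q (j - 1 - k), ← zpow_add₀ hq0, hcast]
          congr 1
          ring
        rw [hxq, show q ^ (-(k:ℤ)) = (q⁻¹) ^ k by rw [zpow_neg, zpow_natCast, inv_pow]]
        have hik : (q⁻¹) ^ k * q ^ k = 1 := by
          rw [← mul_pow, inv_mul_cancel₀ hq0, one_pow]
        linear_combination (-1 : ℂ) * hik
      rw [Finset.prod_congr rfl hterm, Finset.prod_mul_distrib, Finset.prod_pow_eq_pow_sum]
    have hval : ∏' k : ℕ, (1 + x * q ^ k)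
        = (q⁻¹) ^ (∑ k ∈ range j, k) * (∏ l ∈ range j, (1 + q ^ l)) * PP := by
      rw [← hsplit, htail, hhead]
    rw [hval]
    -- collapse powers of r
    have hS2 : 2 * (∑ k ∈ range j, k) + j = j ^ 2 := by
      have hg := Finset.sum_range_id_mul_two j
      cases j with
      | zero => simp
      | succ m =>
        have h2 : (m + 1) ^ 2 = (m + 1) * m + (m + 1) := by ring
        have h3 : (m + 1) * (m + 1 - 1) = (m + 1) * m := by simp
        rw [h2]
        rw [h3] at hg
        omega
    have claim3 : r ^ (j ^ 2) * (q⁻¹) ^ (∑ k ∈ range j, k) = r ^ j := by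
      have hqi : (q⁻¹ : ℂ) = (r⁻¹) ^ 2 := by rw [← hr, inv_pow]
      rw [hqi, ← pow_mul]
      rw [show j ^ 2 = 2 * (∑ k ∈ range j, k) + j from hS2.symm, pow_add]
      have hrr : r ^ (2 * (∑ k ∈ range j, k)) * (r⁻¹) ^ (2 * (∑ k ∈ range j, k)) = 1 := by
        rw [← mul_pow, mul_inv_cancel₀ hr0, one_pow]
      calc r ^ (2 * ∑ k ∈ range j, k) * r ^ j * (r⁻¹) ^ (2 * ∑ k ∈ range j, k)
          = (r ^ (2 * ∑ k ∈ range j, k) * (r⁻¹) ^ (2 * ∑ k ∈ range j, k)) * r ^ j := by ring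
      _ = r ^ j := by rw [hrr, one_mul]
    calc r ^ j ^ 2 / qPoch q q j
          * (((q⁻¹) ^ (∑ k ∈ range j, k) * ∏ l ∈ range j, (1 + q ^ l)) * PP)
        = (r ^ j ^ 2 * (q⁻¹) ^ (∑ k ∈ range j, k))
            * ((∏ l ∈ range j, (1 + q ^ l)) * PP) / qPoch q q j := by ring
    _ = r ^ j * ((∏ l ∈ range j, (1 + q ^ l)) * PP) / qPoch q q j := by rw [claim3]
    _ = PP * ((∏ l ∈ range j, (1 + q ^ l)) * r ^ j / qPoch q q j) := by ring
  -- outer sum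
  have houter : ∑' j : ℕ, ∑' i : ℕ, F (i, j)
      = PP * ∑' j : ℕ, (∏ l ∈ range j, (1 + q ^ l)) * r ^ j / qPoch q q j := by
    rw [← tsum_mul_left]
    exact tsum_congr inner
  have hgauss := qgauss hq0 hq hrn
  -- NN * hsum = PPp, so hsum = PPp / NN
  have hsumval : ∑' j : ℕ, (∏ l ∈ range j, (1 + q ^ l)) * r ^ j / qPoch q q j = PPp / NN := by
    rw [eq_div_iff hNNne]
    rw [hPPp, hNN]
    rw [mul_comm]
    exact hgauss
  have hPI := prod_identity hq0 hq hr hr0 hrn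
  rw [hswap, houter, hsumval]
  have hqpi : qPochInf r q = NN := rfl
  rw [hqpi]
  have hPI' : PP * (PPp * NN) = 1 := by rw [hPP, hPPp, hNN]; exact hPI
  rw [eq_div_iff (pow_ne_zero 2 hNNne)]
  have hgoal : PP * (PPp / NN) * NN ^ 2 = PP * (PPp * NN) := by
    field_simp
  rw [hgoal, hPI']
end

section
/- For |q|<1, ∑_{i,j≥0} q^{((i-j)^2+i+j)/2} / ((q;q)_i (q;q)_j) = (q^2;q^2)_∞^2 / (q;q)_∞^3. -/
open scoped BigOperators
open Filter Finset

namespace Stmt3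

variable {q : ℂ}

lemma norm_mul_pow_lt (hq : ‖q‖ < 1) (k : ℕ) : ‖q * q ^ k‖ < 1 := by
  rw [norm_mul, norm_pow]
  have h1 : ‖q‖ ^ k ≤ 1 := pow_le_one₀ (norm_nonneg q) hq.le
  nlinarith [norm_nonneg q]

lemma factor_ne_zero (hq : ‖q‖ < 1) (k : ℕ) : (1 : ℂ) - q * q ^ k ≠ 0 := by
  intro h
  have h2 : (1 : ℂ) = q * q ^ k := by linear_combination h
  have := norm_mul_pow_lt hq k
  rw [← h2] at this
  simp at this

lemma qPoch_ne_zero (hq : ‖q‖ < 1) (n : ℕ) : qPoch q q n ≠ 0 :=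
  Finset.prod_ne_zero_iff.2 fun k _ => factor_ne_zero hq k

lemma one_sub_norm_le (k : ℕ) : 1 - ‖q‖ * ‖q‖ ^ k ≤ ‖1 - q * q ^ k‖ := by
  calc 1 - ‖q‖ * ‖q‖ ^ k = ‖(1:ℂ)‖ - ‖q * q ^ k‖ := by rw [norm_mul, norm_pow]; simp
    _ ≤ ‖1 - q * q ^ k‖ := norm_sub_norm_le _ _

/-- `exp (-(t/(1-r))) ≤ 1 - t` for `0 ≤ t ≤ r < 1`. -/
lemma exp_le_one_sub {r t : ℝ} (hr1 : r < 1) (ht0 : 0 ≤ t) (htr : t ≤ r) :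
    Real.exp (-(t / (1 - r))) ≤ 1 - t := by
  have h1 : (0:ℝ) < 1 - r := by linarith
  set s := t / (1 - r) with hs
  have hs0 : 0 ≤ s := by positivity
  have h2 : s + 1 ≤ Real.exp s := Real.add_one_le_exp _
  have h3 : (1:ℝ) ≤ (1 - t) * (s + 1) := by
    rw [← sub_nonneg]
    have he : (1 - t) * (s + 1) - 1 = t * (r - t) / (1 - r) := by
      rw [hs]
      field_simp
      ring
    rw [he]
    have : 0 ≤ t * (r - t) := mul_nonneg ht0 (by linarith)
    positivity
  have h5 : 1 ≤ (1 - t) * Real.exp s := by nlinarith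
  have hid : Real.exp (-s) * Real.exp s = 1 := by rw [← Real.exp_add]; simp
  nlinarith [Real.exp_pos s, Real.exp_pos (-s)]

lemma sum_pow_le (hq : ‖q‖ < 1) (n : ℕ) :
    ∑ k ∈ range n, ‖q‖ * ‖q‖ ^ k ≤ ‖q‖ / (1 - ‖q‖) := by
  have h1 : (0:ℝ) < 1 - ‖q‖ := by linarith
  have h2 : ∑ k ∈ range n, ‖q‖ ^ k ≤ (1 - ‖q‖)⁻¹ := by
    rw [← tsum_geometric_of_lt_one (norm_nonneg q) hq]
    exact Summable.sum_le_tsum (range n) (fun i _ => by positivity)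
      (summable_geometric_of_lt_one (norm_nonneg q) hq)
  rw [← Finset.mul_sum, div_eq_mul_inv]
  exact mul_le_mul_of_nonneg_left h2 (norm_nonneg q)

/-- uniform positive lower bound for `‖qPoch q q n‖`. -/
lemma le_norm_qPoch (hq : ‖q‖ < 1) (n : ℕ) :
    Real.exp (-(‖q‖ / (1 - ‖q‖) ^ 2)) ≤ ‖qPoch q q n‖ := by
  have h1 : (0:ℝ) < 1 - ‖q‖ := by linarith
  have step : ∀ k : ℕ, Real.exp (-(‖q‖ * ‖q‖ ^ k / (1 - ‖q‖))) ≤ ‖1 - q * q ^ k‖ := by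
    intro k
    refine le_trans (exp_le_one_sub hq (by positivity) ?_) (one_sub_norm_le k)
    have : ‖q‖ ^ k ≤ 1 := pow_le_one₀ (norm_nonneg q) hq.le
    nlinarith [norm_nonneg q]
  calc Real.exp (-(‖q‖ / (1 - ‖q‖) ^ 2))
      ≤ Real.exp (-((∑ k ∈ range n, ‖q‖ * ‖q‖ ^ k) / (1 - ‖q‖))) := by
        apply Real.exp_le_exp.2
        rw [neg_le_neg_iff, div_le_div_iff₀ h1 (by positivity)]
        have h2 := sum_pow_le hq n
        have h3 : (∑ k ∈ range n, ‖q‖ * ‖q‖ ^ k) * (1 - ‖q‖) ≤ ‖q‖ := by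
          calc (∑ k ∈ range n, ‖q‖ * ‖q‖ ^ k) * (1 - ‖q‖)
              ≤ (‖q‖ / (1 - ‖q‖)) * (1 - ‖q‖) := mul_le_mul_of_nonneg_right h2 h1.le
            _ = ‖q‖ := div_mul_cancel₀ _ h1.ne'
        nlinarith [norm_nonneg q, Finset.sum_nonneg (fun k (_ : k ∈ range n) =>
          mul_nonneg (norm_nonneg q) (pow_nonneg (norm_nonneg q) k))]
    _ = ∏ k ∈ range n, Real.exp (-(‖q‖ * ‖q‖ ^ k / (1 - ‖q‖))) := by
        rw [← Real.exp_sum]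
        congr 1
        rw [Finset.sum_div, ← Finset.sum_neg_distrib]
    _ ≤ ∏ k ∈ range n, ‖1 - q * q ^ k‖ := by
        apply Finset.prod_le_prod (fun k _ => (Real.exp_pos _).le) (fun k _ => step k)
    _ = ‖qPoch q q n‖ := by rw [qPoch, norm_prod]

lemma qPoch_succ (a : ℂ) (n : ℕ) : qPoch a q (n+1) = qPoch a q n * (1 - a * q ^ n) :=
  Finset.prod_range_succ _ _

lemma tri_succ (n : ℕ) : (n+1)*(n+2)/2 = n*(n+1)/2 + (n+1) := by
  have h : (n+1)*(n+2) = n*(n+1) + (n+1)*2 := by ring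
  rw [h, Nat.add_mul_div_right _ _ (by norm_num : 0 < 2)]

noncomputable def F (q x : ℂ) (j : ℕ) : ℂ := q ^ (j*(j+1)/2) * x ^ j / qPoch q q j

lemma F_zero (x : ℂ) : F q x 0 = 1 := by simp [F, qPoch]

lemma F_succ (hq : ‖q‖ < 1) (x : ℂ) (j : ℕ) :
    F q x (j+1) = F q x j * (q ^ (j+1) * x / (1 - q * q ^ j)) := by
  have hP := qPoch_ne_zero hq j
  have hf := factor_ne_zero hq j
  rw [F, F, tri_succ, pow_add, qPoch_succ]
  field_simp
  ring

lemma summable_F (hq : ‖q‖ < 1) (x : ℂ) : Summable (F q x) := by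
  apply summable_of_ratio_norm_eventually_le (r := 1/2) (by norm_num)
  have h1 : (0:ℝ) < 1 - ‖q‖ := by linarith
  have ht : Tendsto (fun j : ℕ => ‖q‖ ^ (j+1) * ‖x‖ / (1 - ‖q‖)) atTop (nhds 0) := by
    have h2 : Tendsto (fun j : ℕ => ‖q‖ ^ (j+1)) atTop (nhds 0) :=
      (tendsto_pow_atTop_nhds_zero_of_lt_one (norm_nonneg q) hq).comp (tendsto_add_atTop_nat 1)
    simpa using (h2.mul_const ‖x‖).div_const (1 - ‖q‖)
  filter_upwards [ht.eventually (gt_mem_nhds (by norm_num : (0:ℝ) < 1/2))] with j hj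
  rw [F_succ hq x j, norm_mul]
  have hden : 1 - ‖q‖ ≤ ‖1 - q * q ^ j‖ := by
    refine le_trans ?_ (one_sub_norm_le j)
    have : ‖q‖ * ‖q‖ ^ j ≤ ‖q‖ * 1 :=
      mul_le_mul_of_nonneg_left (pow_le_one₀ (norm_nonneg q) hq.le) (norm_nonneg q)
    nlinarith
  have hb : ‖q ^ (j+1) * x / (1 - q * q ^ j)‖ ≤ ‖q‖ ^ (j+1) * ‖x‖ / (1 - ‖q‖) := by
    rw [norm_div, norm_mul, norm_pow]
    exact div_le_div_of_nonneg_left (by positivity) h1 hden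
  calc ‖F q x j‖ * ‖q ^ (j+1) * x / (1 - q * q ^ j)‖
      ≤ ‖F q x j‖ * (‖q‖ ^ (j+1) * ‖x‖ / (1 - ‖q‖)) :=
        mul_le_mul_of_nonneg_left hb (norm_nonneg _)
    _ ≤ ‖F q x j‖ * (1/2) := mul_le_mul_of_nonneg_left hj.le (norm_nonneg _)
    _ = 1/2 * ‖F q x j‖ := by ring

lemma g_funeq (hq : ‖q‖ < 1) (x : ℂ) :
    ∑' j, F q x j = (1 + x * q) * ∑' j, F q (x * q) j := by
  have S1 := summable_F hq x
  have S2 := summable_F hq (x * q)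
  have hD : ∀ k, F q x (k+1) - F q (x*q) (k+1) = x * q * F q (x*q) k := by
    intro k
    have hP := qPoch_ne_zero hq k
    have hf := factor_ne_zero hq k
    rw [F_succ hq x k, F_succ hq (x*q) k, F, F]
    field_simp
    ring
  have hsub : Summable (fun j => F q x j - F q (x*q) j) := S1.sub S2
  have e1 : ∑' j, (F q x j - F q (x*q) j)
      = ∑' j, F q x j - ∑' j, F q (x*q) j := Summable.tsum_sub S1 S2
  have e2 : ∑' j, (F q x j - F q (x*q) j) = x * q * ∑' k, F q (x*q) k := by
    rw [Summable.tsum_eq_zero_add hsub]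
    simp only [F_zero, sub_self, zero_add]
    rw [tsum_congr hD, tsum_mul_left]
  have e3 := e1 ▸ e2
  linear_combination e3

lemma g_iter (hq : ‖q‖ < 1) (x : ℂ) (N : ℕ) :
    ∑' j, F q x j
      = (∏ k ∈ range N, (1 + x * q ^ (k+1))) * ∑' j, F q (x * q ^ N) j := by
  induction N with
  | zero => simp
  | succ n ih =>
    rw [ih, g_funeq hq (x * q ^ n), prod_range_succ]
    have e : x * q ^ n * q = x * q ^ (n+1) := by ring
    rw [e]
    ring

set_option maxHeartbeats 1000000 in
lemma g_sub_one_bound (hq : ‖q‖ < 1) :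
    ∃ C : ℝ, 0 ≤ C ∧ ∀ y : ℂ, ‖y‖ ≤ 1 →
      ‖(∑' j, F q y j) - 1‖ ≤ C * ‖y‖ := by
  have hr0 : 0 ≤ ‖q‖ := norm_nonneg q
  have h1 : (0:ℝ) < 1 - ‖q‖ := by linarith
  refine ⟨Real.exp (‖q‖ / (1 - ‖q‖) ^ 2) * (‖q‖ / (1 - ‖q‖)), by positivity, fun y hy => ?_⟩
  have Snorm : Summable (fun k => ‖F q y (k+1)‖) :=
    (summable_nat_add_iff 1).2 (summable_F hq y).norm
  have hshift : (∑' j, F q y j) - 1 = ∑' k, F q y (k+1) := by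
    rw [Summable.tsum_eq_zero_add (summable_F hq y), F_zero]
    ring
  have hterm : ∀ k : ℕ, ‖F q y (k+1)‖
      ≤ Real.exp (‖q‖ / (1 - ‖q‖) ^ 2) * ‖y‖ * ‖q‖ ^ (k+1) := by
    intro k
    have hPl := le_norm_qPoch hq (k+1)
    have hPl0 : (0:ℝ) < Real.exp (-(‖q‖ / (1 - ‖q‖) ^ 2)) := Real.exp_pos _
    have hPpos : (0:ℝ) < ‖qPoch q q (k+1)‖ := lt_of_lt_of_le hPl0 hPl
    have hnum : ‖q ^ ((k+1)*(k+2)/2) * y ^ (k+1)‖ ≤ ‖q‖ ^ (k+1) * ‖y‖ := by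
      rw [norm_mul, norm_pow, norm_pow]
      have e1 : ‖q‖ ^ ((k+1)*(k+2)/2) ≤ ‖q‖ ^ (k+1) := by
        apply pow_le_pow_of_le_one hr0 hq.le
        rw [Nat.le_div_iff_mul_le (by norm_num : 0 < 2)]
        nlinarith
      have e2 : ‖y‖ ^ (k+1) ≤ ‖y‖ := by
        calc ‖y‖ ^ (k+1) ≤ ‖y‖ ^ 1 := pow_le_pow_of_le_one (norm_nonneg y) hy (by omega)
          _ = ‖y‖ := pow_one _
      exact mul_le_mul e1 e2 (by positivity) (by positivity)
    have hF : ‖F q y (k+1)‖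
        = ‖q ^ ((k+1)*(k+2)/2) * y ^ (k+1)‖ / ‖qPoch q q (k+1)‖ := by
      rw [F, norm_div]
    rw [hF, div_le_iff₀ hPpos]
    have hBe : Real.exp (‖q‖ / (1 - ‖q‖) ^ 2) * Real.exp (-(‖q‖ / (1 - ‖q‖) ^ 2)) = 1 := by
      rw [← Real.exp_add]; simp
    calc ‖q ^ ((k+1)*(k+2)/2) * y ^ (k+1)‖ ≤ ‖q‖ ^ (k+1) * ‖y‖ := hnum
      _ = Real.exp (‖q‖ / (1 - ‖q‖) ^ 2) * ‖y‖ * ‖q‖ ^ (k+1)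
            * Real.exp (-(‖q‖ / (1 - ‖q‖) ^ 2)) := by
          rw [show Real.exp (‖q‖ / (1 - ‖q‖) ^ 2) * ‖y‖ * ‖q‖ ^ (k+1)
            * Real.exp (-(‖q‖ / (1 - ‖q‖) ^ 2))
            = (Real.exp (‖q‖ / (1 - ‖q‖) ^ 2) * Real.exp (-(‖q‖ / (1 - ‖q‖) ^ 2)))
              * (‖y‖ * ‖q‖ ^ (k+1)) from by ring, hBe]
          ring
      _ ≤ Real.exp (‖q‖ / (1 - ‖q‖) ^ 2) * ‖y‖ * ‖q‖ ^ (k+1) * ‖qPoch q q (k+1)‖ := by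
          apply mul_le_mul_of_nonneg_left hPl (by positivity)
  calc ‖(∑' j, F q y j) - 1‖ = ‖∑' k, F q y (k+1)‖ := by rw [hshift]
    _ ≤ ∑' k, ‖F q y (k+1)‖ := norm_tsum_le_tsum_norm Snorm
    _ ≤ ∑' k : ℕ, Real.exp (‖q‖ / (1 - ‖q‖) ^ 2) * ‖y‖ * ‖q‖ ^ (k+1) := by
        apply Summable.tsum_le_tsum hterm Snorm
        apply Summable.mul_left
        exact (summable_nat_add_iff 1).2 (summable_geometric_of_lt_one hr0 hq)
    _ = Real.exp (‖q‖ / (1 - ‖q‖) ^ 2) * ‖y‖ * ∑' k : ℕ, ‖q‖ ^ (k+1) := tsum_mul_left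
    _ = Real.exp (‖q‖ / (1 - ‖q‖) ^ 2) * ‖y‖ * (‖q‖ * (1-‖q‖)⁻¹) := by
        congr 1
        have h : ∀ k : ℕ, ‖q‖ ^ (k+1) = ‖q‖ * ‖q‖ ^ k := fun k => by ring
        rw [tsum_congr h, tsum_mul_left, tsum_geometric_of_lt_one hr0 hq]
    _ = Real.exp (‖q‖ / (1 - ‖q‖) ^ 2) * (‖q‖ / (1-‖q‖)) * ‖y‖ := by
        rw [div_eq_mul_inv]
        ring

lemma multipliable_one_add (f : ℕ → ℂ) (hs : Summable f) (h0 : ∀ n, 1 + f n ≠ 0) :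
    Multipliable fun n => 1 + f n := by
  apply Complex.multipliable_of_summable_log
  have htend : Tendsto (fun n => ‖f n‖) atTop (nhds 0) := by
    simpa using hs.tendsto_atTop_zero.norm
  have hev : ∀ᶠ n in atTop, ‖f n‖ ≤ 1/2 := by
    filter_upwards [htend.eventually (gt_mem_nhds (by norm_num : (0:ℝ) < 1/2))] with n hn
    exact hn.le
  apply Summable.of_norm_bounded_eventually_nat (g := fun n => 3/2 * ‖f n‖)
    (hs.norm.mul_left _)
  filter_upwards [hev] with n hn
  exact Complex.norm_log_one_add_half_le_self hn

lemma tendsto_g_one (hq : ‖q‖ < 1) (x : ℂ) :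
    Tendsto (fun N => ∑' j, F q (x * q ^ N) j) atTop (nhds 1) := by
  obtain ⟨C, hC0, hC⟩ := g_sub_one_bound hq
  have hr : Tendsto (fun N : ℕ => ‖x‖ * ‖q‖ ^ N) atTop (nhds 0) := by
    simpa using (tendsto_pow_atTop_nhds_zero_of_lt_one (norm_nonneg q) hq).const_mul ‖x‖
  have hev : ∀ᶠ N in atTop, ‖x‖ * ‖q‖ ^ N ≤ 1 := by
    filter_upwards [hr.eventually (gt_mem_nhds zero_lt_one)] with N hN
    exact hN.le
  have h0 : Tendsto (fun N => (∑' j, F q (x * q ^ N) j) - 1) atTop (nhds 0) := by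
    apply squeeze_zero_norm' ?_ (by simpa using hr.const_mul C)
    filter_upwards [hev] with N hN
    have hyn : ‖x * q ^ N‖ ≤ 1 := by rw [norm_mul, norm_pow]; exact hN
    calc ‖(∑' j, F q (x * q ^ N) j) - 1‖ ≤ C * ‖x * q ^ N‖ := hC _ hyn
      _ = C * (‖x‖ * ‖q‖ ^ N) := by rw [norm_mul, norm_pow]
  have := h0.add_const 1
  simpa using this

lemma g_eq_tprod (hq : ‖q‖ < 1) (x : ℂ) (hx : ∀ k : ℕ, 1 + x * q ^ (k+1) ≠ 0) :
    ∑' j, F q x j = ∏' k : ℕ, (1 + x * q ^ (k+1)) := by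
  have hsum : Summable (fun k : ℕ => x * q ^ (k+1)) := by
    apply Summable.congr ((summable_geometric_of_norm_lt_one hq).mul_left (x * q))
    intro k
    ring
  have hm : Multipliable (fun k : ℕ => 1 + x * q ^ (k+1)) :=
    multipliable_one_add _ hsum hx
  have h1 : Tendsto (fun N => ∏ k ∈ range N, (1 + x * q ^ (k+1))) atTop
      (nhds (∏' k : ℕ, (1 + x * q ^ (k+1)))) := hm.hasProd.tendsto_prod_nat
  have h2 := tendsto_g_one hq x
  have h3 := h1.mul h2
  rw [mul_one] at h3
  have h4 : Tendsto (fun _ : ℕ => ∑' j, F q x j) atTop (nhds (∑' j, F q x j)) :=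
    tendsto_const_nhds
  apply tendsto_nhds_unique h4
  apply Tendsto.congr ?_ h3
  intro N
  exact (g_iter hq x N).symm

lemma multipliable_factor (hq : ‖q‖ < 1) (a : ℂ) (h0 : ∀ k : ℕ, 1 - a * q ^ k ≠ 0) :
    Multipliable (fun k : ℕ => 1 - a * q ^ k) := by
  have hsum : Summable (fun k : ℕ => -(a * q ^ k)) := by
    apply Summable.congr ((summable_geometric_of_norm_lt_one hq).mul_left (-a))
    intro k
    ring
  have := multipliable_one_add _ hsum (fun n => by
    rw [← sub_eq_add_neg]; exact h0 n)
  apply this.congr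
  intro k
  rw [← sub_eq_add_neg]

lemma tendsto_qPoch (hq : ‖q‖ < 1) (a : ℂ) (h0 : ∀ k : ℕ, 1 - a * q ^ k ≠ 0) :
    Tendsto (fun N => qPoch a q N) atTop (nhds (qPochInf a q)) :=
  (multipliable_factor hq a h0).hasProd.tendsto_prod_nat

lemma qPochInf_q_ne_zero (hq : ‖q‖ < 1) : qPochInf q q ≠ 0 := by
  have ht := (tendsto_qPoch hq q (factor_ne_zero hq)).norm
  have hle : Real.exp (-(‖q‖ / (1 - ‖q‖) ^ 2)) ≤ ‖qPochInf q q‖ :=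
    ge_of_tendsto' ht (fun N => le_norm_qPoch hq N)
  intro h
  rw [h] at hle
  simp at hle
  exact absurd hle (not_le.2 (Real.exp_pos _))

lemma two_tri (n : ℕ) : 2 * (n*(n+1)/2) = n*(n+1) :=
  Nat.mul_div_cancel' (Nat.even_mul_succ_self n).two_dvd

lemma tri_split (i : ℕ) : i*(i+1)/2 = (∑ j ∈ range i, j) + i := by
  cases i with
  | zero => simp
  | succ m =>
    have h2 := Finset.sum_range_id_mul_two (m+1)
    have h3 := two_tri (m+1)
    have h4 : (m+1)*(m+1+1) = (m+1)*((m+1)-1) + 2*(m+1) := by simp; ring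
    omega

lemma e_eq (i j : ℕ) :
    ((((i:ℤ)) - j)^2 + i + j)/2
      = ((i*(i+1)/2 : ℕ) : ℤ) + ((j*(j+1)/2 : ℕ) : ℤ) - (i:ℤ)*j := by
  have hi : (2 * (i*(i+1)/2 : ℕ) : ℤ) = (i:ℤ)*(i+1) := by
    rw [show (2 * (i*(i+1)/2 : ℕ) : ℤ) = ((2 * (i*(i+1)/2) : ℕ) : ℤ) from by push_cast; ring,
      two_tri]
    push_cast
    ring
  have hj : (2 * (j*(j+1)/2 : ℕ) : ℤ) = (j:ℤ)*(j+1) := by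
    rw [show (2 * (j*(j+1)/2 : ℕ) : ℤ) = ((2 * (j*(j+1)/2) : ℕ) : ℤ) from by push_cast; ring,
      two_tri]
    push_cast
    ring
  have h : (((i:ℤ)) - j)^2 + i + j
      = 2 * (((i*(i+1)/2 : ℕ) : ℤ) + ((j*(j+1)/2 : ℕ) : ℤ) - (i:ℤ)*j) := by
    linear_combination -hi - hj
  rw [h, Int.mul_ediv_cancel_left _ (by norm_num : (2:ℤ) ≠ 0)]

lemma e_nonneg (i j : ℕ) :
    (0:ℤ) ≤ ((i*(i+1)/2 : ℕ) : ℤ) + ((j*(j+1)/2 : ℕ) : ℤ) - (i:ℤ)*j := by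
  have hi : (2 * (i*(i+1)/2 : ℕ) : ℤ) = (i:ℤ)*(i+1) := by
    rw [show (2 * (i*(i+1)/2 : ℕ) : ℤ) = ((2 * (i*(i+1)/2) : ℕ) : ℤ) from by push_cast; ring,
      two_tri]
    push_cast
    ring
  have hj : (2 * (j*(j+1)/2 : ℕ) : ℤ) = (j:ℤ)*(j+1) := by
    rw [show (2 * (j*(j+1)/2 : ℕ) : ℤ) = ((2 * (j*(j+1)/2) : ℕ) : ℤ) from by push_cast; ring,
      two_tri]
    push_cast
    ring
  nlinarith [sq_nonneg ((i:ℤ) - j)]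

lemma zpow_e (hq0 : q ≠ 0) (i j : ℕ) :
    q ^ (((((i:ℤ)) - j)^2 + i + j)/2)
      = q ^ (i*(i+1)/2) * (q ^ (j*(j+1)/2) * ((q ^ i)⁻¹) ^ j) := by
  rw [e_eq]
  rw [show ((i*(i+1)/2 : ℕ) : ℤ) + ((j*(j+1)/2 : ℕ) : ℤ) - (i:ℤ)*j
    = ((i*(i+1)/2 : ℕ) : ℤ) + (((j*(j+1)/2 : ℕ) : ℤ) + (-((i*j : ℕ) : ℤ))) from by
      push_cast; ring]
  rw [zpow_add₀ hq0, zpow_add₀ hq0, zpow_natCast, zpow_natCast, zpow_neg, zpow_natCast,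
    pow_mul, ← inv_pow]

lemma term_eq (hq0 : q ≠ 0) (i j : ℕ) :
    q ^ (((((i:ℤ)) - j)^2 + i + j)/2) / (qPoch q q i * qPoch q q j)
      = (q ^ (i*(i+1)/2) / qPoch q q i) * F q ((q ^ i)⁻¹) j := by
  rw [zpow_e hq0, F, div_mul_div_comm]

lemma sum_pow_le' (hq : ‖q‖ < 1) (c : ℝ) (hc : 0 ≤ c) (n : ℕ) :
    ∑ k ∈ range n, c * ‖q‖ ^ k ≤ c / (1 - ‖q‖) := by
  have h1 : (0:ℝ) < 1 - ‖q‖ := by linarith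
  have h2 : ∑ k ∈ range n, ‖q‖ ^ k ≤ (1 - ‖q‖)⁻¹ := by
    rw [← tsum_geometric_of_lt_one (norm_nonneg q) hq]
    exact Summable.sum_le_tsum (range n) (fun i _ => by positivity)
      (summable_geometric_of_lt_one (norm_nonneg q) hq)
  rw [← Finset.mul_sum, div_eq_mul_inv]
  exact mul_le_mul_of_nonneg_left h2 hc

lemma norm_qPoch_le (hq : ‖q‖ < 1) (a : ℂ) (n : ℕ) :
    ‖qPoch a q n‖ ≤ Real.exp (‖a‖ / (1 - ‖q‖)) := by
  have h1 : (0:ℝ) < 1 - ‖q‖ := by linarith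
  calc ‖qPoch a q n‖ = ∏ k ∈ range n, ‖1 - a * q ^ k‖ := by rw [qPoch, norm_prod]
    _ ≤ ∏ k ∈ range n, Real.exp (‖a‖ * ‖q‖ ^ k) := by
        apply Finset.prod_le_prod (fun k _ => norm_nonneg _)
        intro k _
        calc ‖1 - a * q ^ k‖ ≤ ‖(1:ℂ)‖ + ‖a * q ^ k‖ := norm_sub_le _ _
          _ = 1 + ‖a‖ * ‖q‖ ^ k := by rw [norm_one, norm_mul, norm_pow]
          _ ≤ Real.exp (‖a‖ * ‖q‖ ^ k) := by
              have := Real.add_one_le_exp (‖a‖ * ‖q‖ ^ k)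
              linarith
    _ = Real.exp (∑ k ∈ range n, ‖a‖ * ‖q‖ ^ k) := (Real.exp_sum _ _).symm
    _ ≤ Real.exp (‖a‖ / (1 - ‖q‖)) :=
        Real.exp_le_exp.2 (sum_pow_le' hq ‖a‖ (norm_nonneg a) n)

lemma factor_ne_zero' (hq : ‖q‖ < 1) (k : ℕ) : (1:ℂ) - (-q) * q ^ k ≠ 0 := by
  intro h
  have h2 : q * q ^ k = -1 := by linear_combination h
  have h3 := norm_mul_pow_lt hq k
  rw [h2] at h3
  simp at h3

lemma prod_reflect (hq0 : q ≠ 0) (i : ℕ) :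
    ∏ k ∈ range i, ((1:ℂ) + (q ^ i)⁻¹ * q ^ (k+1)) = ∏ j ∈ range i, (1 + (q ^ j)⁻¹) := by
  rw [← Finset.prod_range_reflect]
  apply Finset.prod_congr rfl
  intro j hj
  rw [Finset.mem_range] at hj
  congr 1
  have h1 : i - 1 - j + 1 = i - j := by omega
  rw [h1]
  have h2 : q ^ (i - j) * q ^ j = q ^ i := by rw [← pow_add]; congr 1; omega
  have hpi : q ^ i ≠ 0 := pow_ne_zero _ hq0
  have hpj : q ^ j ≠ 0 := pow_ne_zero _ hq0
  field_simp
  linear_combination h2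

lemma row_shape (hq0 : q ≠ 0) (i : ℕ) :
    q ^ (i*(i+1)/2) * ∏ k ∈ range i, ((1:ℂ) + (q ^ i)⁻¹ * q ^ (k+1))
      = q ^ i * qPoch (-1) q i := by
  rw [prod_reflect hq0 i]
  have h2 : ∏ j ∈ range i, ((1:ℂ) + (q ^ j)⁻¹)
      = (∏ j ∈ range i, (q ^ j)⁻¹) * ∏ j ∈ range i, ((1:ℂ) + q ^ j) := by
    rw [← Finset.prod_mul_distrib]
    apply Finset.prod_congr rfl
    intro j _
    have hpj : q ^ j ≠ 0 := pow_ne_zero _ hq0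
    field_simp
    ring
  have h3 : ∏ j ∈ range i, ((q:ℂ) ^ j)⁻¹ = (q ^ (∑ j ∈ range i, j))⁻¹ := by
    rw [Finset.prod_inv_distrib, Finset.prod_pow_eq_pow_sum]
  have h4 : qPoch (-1) q i = ∏ j ∈ range i, ((1:ℂ) + q ^ j) := by
    unfold qPoch
    apply Finset.prod_congr rfl
    intro j _
    ring
  rw [h2, h3, h4, tri_split i, pow_add]
  have hps : q ^ (∑ j ∈ range i, j) ≠ 0 := pow_ne_zero _ hq0
  field_simp

lemma qPoch_neg_one_succ (i : ℕ) : qPoch (-1) q (i+1) = 2 * qPoch (-q) q i := by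
  unfold qPoch
  rw [Finset.prod_range_succ']
  have h1 : ∀ k, (1:ℂ) - (-1) * q ^ (k+1) = 1 - (-q) * q ^ k := by
    intro k
    rw [pow_succ]
    ring
  rw [Finset.prod_congr rfl (fun k _ => h1 k)]
  norm_num
  ring

lemma telescope (hq : ‖q‖ < 1) (N : ℕ) :
    ∑ i ∈ range (N+1), q ^ i * qPoch (-1) q i / qPoch q q i
      = qPoch (-q) q N / qPoch q q N := by
  induction N with
  | zero => simp [qPoch]
  | succ n ih =>
    rw [Finset.sum_range_succ, ih, qPoch_succ q n, qPoch_succ (-q) n, qPoch_neg_one_succ]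
    have hP := qPoch_ne_zero hq n
    have hf := factor_ne_zero hq n
    field_simp
    ring

lemma summable_w (hq : ‖q‖ < 1) :
    Summable (fun i : ℕ => q ^ i * qPoch (-1) q i / qPoch q q i) := by
  apply Summable.of_norm_bounded
    (g := fun i => (Real.exp (1/(1-‖q‖)) * Real.exp (‖q‖/(1-‖q‖)^2)) * ‖q‖ ^ i)
    ((summable_geometric_of_lt_one (norm_nonneg q) hq).mul_left _)
  intro i
  have hPl := le_norm_qPoch hq i
  have hPl0 : (0:ℝ) < Real.exp (-(‖q‖ / (1 - ‖q‖) ^ 2)) := Real.exp_pos _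
  have hPpos : (0:ℝ) < ‖qPoch q q i‖ := lt_of_lt_of_le hPl0 hPl
  have hA : ‖qPoch (-1) q i‖ ≤ Real.exp (1/(1-‖q‖)) := by
    have := norm_qPoch_le hq (-1) i
    simpa using this
  rw [norm_div, norm_mul, norm_pow, div_le_iff₀ hPpos]
  have hBe : Real.exp (‖q‖ / (1 - ‖q‖) ^ 2) * Real.exp (-(‖q‖ / (1 - ‖q‖) ^ 2)) = 1 := by
    rw [← Real.exp_add]; simp
  calc ‖q‖ ^ i * ‖qPoch (-1) q i‖ ≤ ‖q‖ ^ i * Real.exp (1/(1-‖q‖)) :=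
        mul_le_mul_of_nonneg_left hA (by positivity)
    _ = Real.exp (1/(1-‖q‖)) * Real.exp (‖q‖/(1-‖q‖)^2) * ‖q‖ ^ i
          * Real.exp (-(‖q‖ / (1 - ‖q‖) ^ 2)) := by
        rw [show Real.exp (1/(1-‖q‖)) * Real.exp (‖q‖/(1-‖q‖)^2) * ‖q‖ ^ i
          * Real.exp (-(‖q‖ / (1 - ‖q‖) ^ 2))
          = (Real.exp (‖q‖/(1-‖q‖)^2) * Real.exp (-(‖q‖ / (1 - ‖q‖) ^ 2)))
            * (Real.exp (1/(1-‖q‖)) * ‖q‖ ^ i) from by ring, hBe]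
        ring
    _ ≤ Real.exp (1/(1-‖q‖)) * Real.exp (‖q‖/(1-‖q‖)^2) * ‖q‖ ^ i * ‖qPoch q q i‖ :=
        mul_le_mul_of_nonneg_left hPl (by positivity)

lemma tsum_w (hq : ‖q‖ < 1) :
    ∑' i : ℕ, q ^ i * qPoch (-1) q i / qPoch q q i
      = qPochInf (-q) q / qPochInf q q := by
  have hw := summable_w hq
  have h1 : Tendsto
      (fun N => ∑ i ∈ range (N+1), q ^ i * qPoch (-1) q i / qPoch q q i) atTop
      (nhds (∑' i : ℕ, q ^ i * qPoch (-1) q i / qPoch q q i)) :=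
    hw.hasSum.tendsto_sum_nat.comp (tendsto_add_atTop_nat 1)
  have h2 : Tendsto (fun N => qPoch (-q) q N / qPoch q q N) atTop
      (nhds (qPochInf (-q) q / qPochInf q q)) :=
    (tendsto_qPoch hq (-q) (factor_ne_zero' hq)).div
      (tendsto_qPoch hq q (factor_ne_zero hq)) (qPochInf_q_ne_zero hq)
  refine tendsto_nhds_unique ?_ h2
  exact h1.congr (fun N => telescope hq N)

lemma two_e (i j : ℕ) :
    2 * (((i*(i+1)/2 : ℕ) : ℤ) + ((j*(j+1)/2 : ℕ) : ℤ) - (i:ℤ)*j)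
      = (((i:ℤ)) - j)^2 + i + j := by
  have hi : (2 * (i*(i+1)/2 : ℕ) : ℤ) = (i:ℤ)*(i+1) := by
    rw [show (2 * (i*(i+1)/2 : ℕ) : ℤ) = ((2 * (i*(i+1)/2) : ℕ) : ℤ) from by push_cast; ring,
      two_tri]
    push_cast
    ring
  have hj : (2 * (j*(j+1)/2 : ℕ) : ℤ) = (j:ℤ)*(j+1) := by
    rw [show (2 * (j*(j+1)/2 : ℕ) : ℤ) = ((2 * (j*(j+1)/2) : ℕ) : ℤ) from by push_cast; ring,
      two_tri]
    push_cast
    ring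
  linear_combination hi + hj

lemma summable_term (hq : ‖q‖ < 1) (hq0 : q ≠ 0) :
    Summable (fun p : ℕ × ℕ => q ^ (((((p.1:ℤ)) - p.2)^2 + p.1 + p.2)/2)
      / (qPoch q q p.1 * qPoch q q p.2)) := by
  set s := Real.sqrt ‖q‖ with hs
  have hs0 : 0 ≤ s := Real.sqrt_nonneg _
  have hs1 : s < 1 := by
    rw [hs, show (1:ℝ) = Real.sqrt 1 from Real.sqrt_one.symm]
    exact Real.sqrt_lt_sqrt (norm_nonneg q) (by simpa using hq)
  set E := Real.exp (‖q‖/(1-‖q‖)^2) with hE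
  apply Summable.of_norm_bounded (g := fun p : ℕ × ℕ => (E * E) * (s ^ p.1 * s ^ p.2))
  · apply Summable.mul_left
    exact (summable_geometric_of_lt_one hs0 hs1).mul_of_nonneg
      (summable_geometric_of_lt_one hs0 hs1)
      (fun i => by positivity) (fun j => by positivity)
  · rintro ⟨i, j⟩
    simp only
    have he : (0:ℤ) ≤ ((i*(i+1)/2 : ℕ) : ℤ) + ((j*(j+1)/2 : ℕ) : ℤ) - (i:ℤ)*j :=
      e_nonneg i j
    rw [e_eq i j]
    set z : ℤ := ((i*(i+1)/2 : ℕ) : ℤ) + ((j*(j+1)/2 : ℕ) : ℤ) - (i:ℤ)*j with hz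
    have hzn : z = ((z.toNat : ℕ) : ℤ) := (Int.toNat_of_nonneg he).symm
    rw [hzn, zpow_natCast]
    have hij : i + j ≤ 2 * z.toNat := by
      have h2 : (i:ℤ) + j ≤ 2 * z := by
        have := two_e i j
        nlinarith [sq_nonneg ((i:ℤ) - j)]
      omega
    have h1 : ‖q ^ z.toNat‖ ≤ s ^ i * s ^ j := by
      rw [norm_pow, show ‖q‖ = s^2 from (Real.sq_sqrt (norm_nonneg q)).symm, ← pow_mul]
      calc (s^(2*z.toNat)) ≤ s^(i+j) := pow_le_pow_of_le_one hs0 hs1.le hij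
        _ = s^i * s^j := pow_add s i j
    have hPl0 : (0:ℝ) < Real.exp (-(‖q‖ / (1 - ‖q‖) ^ 2)) := Real.exp_pos _
    have hPi := le_norm_qPoch hq i
    have hPj := le_norm_qPoch hq j
    have hPipos : (0:ℝ) < ‖qPoch q q i‖ := lt_of_lt_of_le hPl0 hPi
    have hPjpos : (0:ℝ) < ‖qPoch q q j‖ := lt_of_lt_of_le hPl0 hPj
    have h2 : ‖qPoch q q i‖⁻¹ ≤ E := by
      rw [hE, show Real.exp (‖q‖/(1-‖q‖)^2) = (Real.exp (-(‖q‖/(1-‖q‖)^2)))⁻¹ from by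
        rw [Real.exp_neg, inv_inv]]
      exact inv_anti₀ hPl0 hPi
    have h3 : ‖qPoch q q j‖⁻¹ ≤ E := by
      rw [hE, show Real.exp (‖q‖/(1-‖q‖)^2) = (Real.exp (-(‖q‖/(1-‖q‖)^2)))⁻¹ from by
        rw [Real.exp_neg, inv_inv]]
      exact inv_anti₀ hPl0 hPj
    rw [norm_div, norm_mul, div_eq_mul_inv, mul_inv]
    calc ‖q ^ z.toNat‖ * (‖qPoch q q i‖⁻¹ * ‖qPoch q q j‖⁻¹)
        = ‖q ^ z.toNat‖ * ‖qPoch q q i‖⁻¹ * ‖qPoch q q j‖⁻¹ := by ring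
      _ ≤ (s ^ i * s ^ j) * E * E := by
          apply mul_le_mul (mul_le_mul h1 h2 (by positivity) (by positivity)) h3
            (by positivity) (by positivity)
      _ = (E * E) * (s ^ i * s ^ j) := by ring

lemma one_add_inv_ne (hq : ‖q‖ < 1) (hq0 : q ≠ 0) (i k : ℕ) :
    (1:ℂ) + (q ^ i)⁻¹ * q ^ (k+1) ≠ 0 := by
  intro h
  have hpi : q ^ i ≠ 0 := pow_ne_zero _ hq0
  have h2 : q ^ (k+1) = - q ^ i := by
    field_simp at h
    linear_combination h
  have h3 : ‖q‖ ^ (k+1) = ‖q‖ ^ i := by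
    rw [← norm_pow, ← norm_pow, h2, norm_neg]
  have hr0 : 0 < ‖q‖ := norm_pos_iff.2 hq0
  rcases lt_trichotomy (k+1) i with hlt | heq | hgt
  · have := pow_lt_pow_right_of_lt_one₀ hr0 hq hlt
    linarith
  · rw [heq] at h2
    have h4 : q ^ i = 0 := by linear_combination h2 / 2
    exact hpi h4
  · have := pow_lt_pow_right_of_lt_one₀ hr0 hq hgt
    linarith

lemma row_value (hq : ‖q‖ < 1) (hq0 : q ≠ 0) (i : ℕ) :
    ∑' j : ℕ, q ^ (((((i:ℤ)) - j)^2 + i + j)/2) / (qPoch q q i * qPoch q q j)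
      = q ^ i * qPoch (-1) q i / qPoch q q i * qPochInf (-q) q := by
  have h1 : ∀ j : ℕ, q ^ (((((i:ℤ)) - j)^2 + i + j)/2) / (qPoch q q i * qPoch q q j)
      = (q ^ (i*(i+1)/2) / qPoch q q i) * F q ((q ^ i)⁻¹) j := fun j => term_eq hq0 i j
  rw [tsum_congr h1, tsum_mul_left, g_iter hq ((q ^ i)⁻¹) i,
    inv_mul_cancel₀ (pow_ne_zero i hq0)]
  have hone : ∀ k : ℕ, (1:ℂ) + 1 * q ^ (k+1) ≠ 0 := by
    intro k h
    have e : (1:ℂ) + 1 * q ^ (k+1) = 1 - (-q) * q ^ k := by rw [pow_succ]; ring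
    exact factor_ne_zero' hq k (by rw [← e]; exact h)
  have hg1 : ∑' j : ℕ, F q 1 j = qPochInf (-q) q := by
    rw [g_eq_tprod hq 1 hone]
    unfold qPochInf
    apply tprod_congr
    intro k
    rw [pow_succ]
    ring
  rw [hg1, ← mul_assoc, div_mul_eq_mul_div, row_shape hq0 i]

lemma qPochInf_split (hq : ‖q‖ < 1) :
    qPochInf (q^2) (q^2) = qPochInf q q * qPochInf (-q) q := by
  have hQ := multipliable_factor hq q (factor_ne_zero hq)
  have hB := multipliable_factor hq (-q) (factor_ne_zero' hq)
  unfold qPochInf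
  rw [← Multipliable.tprod_mul hQ hB]
  apply tprod_congr
  intro k
  ring

end Stmt3

theorem stmt_3 (q : ℂ) (hq : ‖q‖ < 1) :
    ∑' p : ℕ × ℕ,
      q ^ ((((p.1 : ℤ) - p.2) ^ 2 + p.1 + p.2) / 2) /
        (qPoch q q p.1 * qPoch q q p.2)
      = (qPochInf (q ^ 2) (q ^ 2)) ^ 2 / (qPochInf q q) ^ 3 := by
  by_cases hq0 : q = 0
  · subst hq0
    have hP : ∀ n : ℕ, qPoch 0 0 n = 1 := fun n => by simp [qPoch]
    have hI : qPochInf 0 0 = 1 := by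
      unfold qPochInf
      simp
    have hL : (∑' p : ℕ × ℕ, (0:ℂ) ^ ((((p.1 : ℤ) - p.2) ^ 2 + p.1 + p.2) / 2) /
        (qPoch 0 0 p.1 * qPoch 0 0 p.2)) = 1 := by
      rw [tsum_eq_single ((0,0) : ℕ × ℕ) ?_]
      · norm_num [hP 0]
      · rintro ⟨i, j⟩ hne
        have hzne : ((((i:ℤ)) - j)^2 + i + j)/2 ≠ 0 := by
          rw [Stmt3.e_eq i j]
          intro h0
          have h2 := Stmt3.two_e i j
          rw [h0, mul_zero] at h2
          have h3 : (i:ℤ) + j ≤ 0 := by nlinarith [sq_nonneg ((i:ℤ) - j)]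
          have hi : i = 0 := by omega
          have hj : j = 0 := by omega
          apply hne
          rw [hi, hj]
        simp only [hP]
        rw [zero_zpow _ hzne]
        simp
    rw [hL]
    rw [show ((0:ℂ)^2) = 0 from by norm_num, hI]
    norm_num
  · have hQ0 := Stmt3.qPochInf_q_ne_zero hq
    have hst := Stmt3.summable_term hq hq0
    calc (∑' p : ℕ × ℕ, q ^ ((((p.1 : ℤ) - p.2) ^ 2 + p.1 + p.2) / 2) /
          (qPoch q q p.1 * qPoch q q p.2))
        = ∑' i : ℕ, ∑' j : ℕ, q ^ ((((i : ℤ) - j) ^ 2 + i + j) / 2) /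
            (qPoch q q i * qPoch q q j) :=
          Summable.tsum_prod' hst fun i => hst.prod_factor i
      _ = ∑' i : ℕ, q ^ i * qPoch (-1) q i / qPoch q q i * qPochInf (-q) q :=
          tsum_congr fun i => Stmt3.row_value hq hq0 i
      _ = (∑' i : ℕ, q ^ i * qPoch (-1) q i / qPoch q q i) * qPochInf (-q) q :=
          tsum_mul_right
      _ = qPochInf (-q) q / qPochInf q q * qPochInf (-q) q := by
          rw [Stmt3.tsum_w hq]
      _ = (qPochInf (q ^ 2) (q ^ 2)) ^ 2 / (qPochInf q q) ^ 3 := by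
          rw [Stmt3.qPochInf_split hq]
          field_simp
end

section
/- For |q|<1 and any complex u, ∑_{i,j≥0} (-1)^i u^{i+j} q^{i^2+2ij+2j^2-i-j} / ((q;q)_i (q^2;q^2)_j) = (u; q^2)_∞. -/
open scoped BigOperators

lemma qPoch_zero (a q : ℂ) : qPoch a q 0 = 1 := by simp [qPoch]

lemma qPoch_succ (a q : ℂ) (n : ℕ) :
    qPoch a q (n + 1) = qPoch a q n * (1 - a * q ^ n) := Finset.prod_range_succ _ _

lemma qpow_ne_one {q : ℂ} (hq : ‖q‖ < 1) {k : ℕ} (hk : 1 ≤ k) : q ^ k ≠ 1 := by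
  intro h
  have h1 : ‖q ^ k‖ < 1 := by
    rw [norm_pow]
    calc ‖q‖ ^ k ≤ ‖q‖ ^ 1 := pow_le_pow_of_le_one (norm_nonneg q) hq.le hk
    _ = ‖q‖ := pow_one _
    _ < 1 := hq
  rw [h] at h1; simp at h1

lemma qPoch_ne_zero {q : ℂ} (hq : ‖q‖ < 1) (n : ℕ) : qPoch q q n ≠ 0 := by
  rw [qPoch]
  apply Finset.prod_ne_zero_iff.2
  intro k _
  have : q * q ^ k = q ^ (k + 1) := by ring
  rw [this]
  intro h
  exact qpow_ne_one hq (Nat.succ_le_succ (Nat.zero_le k)) (sub_eq_zero.mp h).symm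


lemma norm_sq_lt_one {q : ℂ} (hq : ‖q‖ < 1) : ‖q ^ 2‖ < 1 := by
  rw [norm_pow]; exact pow_lt_one₀ (norm_nonneg q) hq two_ne_zero

lemma one_sub_qpow_ne_zero {q : ℂ} (hq : ‖q‖ < 1) {k : ℕ} (hk : 1 ≤ k) :
    1 - q ^ k ≠ 0 := fun h => qpow_ne_one hq hk (sub_eq_zero.mp h).symm

set_option maxHeartbeats 2000000 in
lemma key_rec {q : ℂ} (hq : ‖q‖ < 1) (n : ℕ) :
    (1 - q ^ (2 * (n + 1))) *
      ∑ j ∈ Finset.range (n + 2),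
        (-1 : ℂ) ^ j * q ^ (j * j) / (qPoch q q (n + 1 - j) * qPoch (q ^ 2) (q ^ 2) j)
    = ∑ j ∈ Finset.range (n + 1),
        (-1 : ℂ) ^ j * q ^ (j * j) / (qPoch q q (n - j) * qPoch (q ^ 2) (q ^ 2) j) := by
  have hq2 := norm_sq_lt_one hq
  set E : ℕ → ℂ := fun j =>
    (-1 : ℂ) ^ j * q ^ (j * j + (n + 1) + j) * (1 - q ^ (n + 1 - j)) /
      (qPoch q q (n + 1 - j) * qPoch (q ^ 2) (q ^ 2) j) with hE
  have term : ∀ j ∈ Finset.range (n + 2),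
      (1 - q ^ (2 * (n + 1))) *
        ((-1 : ℂ) ^ j * q ^ (j * j) / (qPoch q q (n + 1 - j) * qPoch (q ^ 2) (q ^ 2) j))
      = (if j = n + 1 then 0 else
          (-1 : ℂ) ^ j * q ^ (j * j) / (qPoch q q (n - j) * qPoch (q ^ 2) (q ^ 2) j))
        + E j - (if j = 0 then 0 else E (j - 1)) := by
    intro j hj
    rw [Finset.mem_range] at hj
    rcases Nat.eq_zero_or_pos j with h0 | hpos
    · subst h0
      simp only [if_pos rfl, hE, eq_self_iff_true, if_true]
      rw [if_neg (by omega : ¬ (0 = n + 1))]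
      simp only [Nat.sub_zero, pow_zero, one_mul, Nat.mul_zero, Nat.zero_mul]
      rw [qPoch_succ q q n, qPoch_zero]
      have h1 : qPoch q q n ≠ 0 := qPoch_ne_zero hq n
      have h2 : (1 : ℂ) - q * q ^ n ≠ 0 := by
        have := one_sub_qpow_ne_zero hq (k := n + 1) (by omega)
        rwa [pow_succ, mul_comm (q ^ n) q] at this
      field_simp
      ring
    · by_cases hj1 : j = n + 1
      · subst hj1
        rw [if_pos rfl, if_neg (by omega : ¬ (n + 1 = 0))]
        simp only [hE]
        have e0 : n + 1 - (n + 1) = 0 := by omega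
        have e1 : n + 1 - 1 = n := by omega
        have e2 : n + 1 - n = 1 := by omega
        rw [e0, e1, e2]
        simp only [pow_zero, sub_self, mul_zero, zero_div, zero_add, qPoch_zero]
        rw [qPoch_succ (q^2) (q^2) n, qPoch_succ q q 0, qPoch_zero]
        have hRn : qPoch (q ^ 2) (q ^ 2) n ≠ 0 := qPoch_ne_zero hq2 n
        have h4 : (1 : ℂ) - q ≠ 0 := by
          have := one_sub_qpow_ne_zero hq (k := 1) le_rfl
          rwa [pow_one] at this
        have h2 : (1 : ℂ) - q ^ 2 * (q ^ 2) ^ n ≠ 0 := by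
          have := one_sub_qpow_ne_zero hq (k := 2 * n + 2) (by omega)
          intro hcon; apply this; rw [← hcon]; ring_nf
        have h3 : (1 : ℂ) - q ^ (2 * (n + 1)) = 1 - q ^ 2 * (q ^ 2) ^ n := by ring_nf
        rw [h3]
        simp only [pow_zero, mul_one, pow_one, one_mul]
        field_simp
        ring
      · -- interior case
        obtain ⟨j', rfl⟩ : ∃ j', j = j' + 1 := ⟨j - 1, by omega⟩
        obtain ⟨i, rfl⟩ : ∃ i, n = j' + 1 + i := ⟨n - j' - 1, by omega⟩
        rw [if_neg hj1, if_neg (by omega : ¬ (j' + 1 = 0))]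
        simp only [hE]
        have e1 : j' + 1 + i + 1 - (j' + 1) = i + 1 := by omega
        have e2 : j' + 1 + i - (j' + 1) = i := by omega
        have e3 : j' + 1 - 1 = j' := by omega
        have e4 : j' + 1 + i + 1 - j' = i + 2 := by omega
        rw [e1, e2, e3, e4]
        rw [qPoch_succ q q (i+1), qPoch_succ q q i, qPoch_succ (q^2) (q^2) j']
        have hPi : qPoch q q i ≠ 0 := qPoch_ne_zero hq i
        have hRj : qPoch (q ^ 2) (q ^ 2) j' ≠ 0 := qPoch_ne_zero hq2 j'
        have h1 : (1 : ℂ) - q * q ^ i ≠ 0 := by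
          have := one_sub_qpow_ne_zero hq (k := i + 1) (by omega)
          rwa [pow_succ, mul_comm (q ^ i) q] at this
        have h2 : (1 : ℂ) - q * q ^ (i + 1) ≠ 0 := by
          have := one_sub_qpow_ne_zero hq (k := i + 2) (by omega)
          intro hcon; apply this; rw [← hcon]; ring_nf
        have h3 : (1 : ℂ) - q ^ 2 * (q ^ 2) ^ j' ≠ 0 := by
          have := one_sub_qpow_ne_zero hq (k := 2 * j' + 2) (by omega)
          intro hcon; apply this; rw [← hcon]; ring_nf
        have hd1 : qPoch q q i * (qPoch (q ^ 2) (q ^ 2) j' * (1 - q ^ 2 * (q ^ 2) ^ j')) ≠ 0 :=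
          mul_ne_zero hPi (mul_ne_zero hRj h3)
        have hd2 : qPoch q q i * (1 - q * q ^ i) * (qPoch (q ^ 2) (q ^ 2) j' * (1 - q ^ 2 * (q ^ 2) ^ j')) ≠ 0 :=
          mul_ne_zero (mul_ne_zero hPi h1) (mul_ne_zero hRj h3)
        have hd3 : qPoch q q i * (1 - q * q ^ i) * (1 - q * q ^ (i + 1)) * qPoch (q ^ 2) (q ^ 2) j' ≠ 0 :=
          mul_ne_zero (mul_ne_zero (mul_ne_zero hPi h1) h2) hRj
        rw [← mul_div_assoc, div_add_div _ _ hd1 hd2,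
          div_sub_div _ _ (mul_ne_zero hd1 hd2) hd3,
          div_eq_div_iff hd2 (mul_ne_zero (mul_ne_zero hd1 hd2) hd3)]
        ring
  rw [Finset.mul_sum, Finset.sum_congr rfl term]
  rw [Finset.sum_sub_distrib, Finset.sum_add_distrib]
  have S1 : ∑ j ∈ Finset.range (n + 2), (if j = n + 1 then 0 else
      (-1 : ℂ) ^ j * q ^ (j * j) / (qPoch q q (n - j) * qPoch (q ^ 2) (q ^ 2) j))
      = ∑ j ∈ Finset.range (n + 1),
        (-1 : ℂ) ^ j * q ^ (j * j) / (qPoch q q (n - j) * qPoch (q ^ 2) (q ^ 2) j) := by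
    rw [Finset.sum_range_succ, if_pos rfl, add_zero]
    exact Finset.sum_congr rfl fun j hj => by
      rw [Finset.mem_range] at hj; rw [if_neg (by omega)]
  have S3 : ∑ j ∈ Finset.range (n + 2), (if j = 0 then 0 else E (j - 1))
      = ∑ j ∈ Finset.range (n + 1), E j := by
    rw [Finset.sum_range_succ']
    simp
  have S2 : ∑ j ∈ Finset.range (n + 2), E j = ∑ j ∈ Finset.range (n + 1), E j := by
    rw [Finset.sum_range_succ]
    have : E (n + 1) = 0 := by
      simp only [hE]
      rw [(by omega : n + 1 - (n + 1) = 0)]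
      simp
    rw [this, add_zero]
  rw [S1, S2, S3]
  ring


lemma T_eq {q : ℂ} (hq : ‖q‖ < 1) (n : ℕ) :
    ∑ j ∈ Finset.range (n + 1),
        (-1 : ℂ) ^ j * q ^ (j * j) / (qPoch q q (n - j) * qPoch (q ^ 2) (q ^ 2) j)
      = 1 / qPoch (q ^ 2) (q ^ 2) n := by
  induction n with
  | zero => simp [qPoch_zero]
  | succ n ih =>
    have hX : (1 : ℂ) - q ^ (2 * (n + 1)) ≠ 0 := one_sub_qpow_ne_zero hq (by omega)
    have hkey := key_rec hq n
    rw [ih] at hkey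
    have hRn : qPoch (q ^ 2) (q ^ 2) n ≠ 0 := qPoch_ne_zero (norm_sq_lt_one hq) n
    have hprod : qPoch (q ^ 2) (q ^ 2) (n + 1)
        = qPoch (q ^ 2) (q ^ 2) n * (1 - q ^ (2 * (n + 1))) := by
      rw [qPoch_succ]; congr 1; ring
    rw [hprod]
    field_simp
    rw [mul_comm] at hkey
    field_simp at hkey
    linear_combination hkey

noncomputable def eulc (q : ℂ) (n : ℕ) : ℂ := (-1) ^ n * q ^ (n * n - n) / qPoch (q ^ 2) (q ^ 2) n

lemma neg_one_pow_sub {j n : ℕ} (h : j ≤ n) : ((-1 : ℂ)) ^ (n - j) = (-1) ^ n * (-1) ^ j := by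
  have h1 : ((-1 : ℂ)) ^ (n - j) * (-1) ^ j = (-1) ^ n := by
    rw [← pow_add]; congr 1; omega
  have h2 : ((-1 : ℂ)) ^ j * (-1) ^ j = 1 := by
    rw [← pow_add, ← two_mul, pow_mul]; norm_num
  calc ((-1 : ℂ)) ^ (n - j) = ((-1 : ℂ)) ^ (n - j) * ((-1) ^ j * (-1) ^ j) := by rw [h2, mul_one]
  _ = (((-1 : ℂ)) ^ (n - j) * (-1) ^ j) * (-1) ^ j := by ring
  _ = (-1) ^ n * (-1) ^ j := by rw [h1]

lemma antidiag_sum {q : ℂ} (hq : ‖q‖ < 1) (u : ℂ) (n : ℕ) :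
    ∑ p ∈ Finset.HasAntidiagonal.antidiagonal n,
      ((-1 : ℂ) ^ p.1 * u ^ (p.1 + p.2) *
          q ^ (p.1 * p.1 + 2 * p.1 * p.2 + 2 * p.2 * p.2 - (p.1 + p.2)) /
        (qPoch q q p.1 * qPoch (q ^ 2) (q ^ 2) p.2))
      = eulc q n * u ^ n := by
  rw [Finset.Nat.sum_antidiagonal_eq_sum_range_succ (fun i j =>
    (-1 : ℂ) ^ i * u ^ (i + j) * q ^ (i * i + 2 * i * j + 2 * j * j - (i + j)) /
      (qPoch q q i * qPoch (q ^ 2) (q ^ 2) j))]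
  have step1 : ∀ i ∈ Finset.range (n + 1),
      (-1 : ℂ) ^ i * u ^ (i + (n - i)) *
          q ^ (i * i + 2 * i * (n - i) + 2 * (n - i) * (n - i) - (i + (n - i))) /
        (qPoch q q i * qPoch (q ^ 2) (q ^ 2) (n - i))
      = (u ^ n * q ^ (n * n - n)) *
          ((-1 : ℂ) ^ i * q ^ ((n - i) * (n - i)) /
            (qPoch q q i * qPoch (q ^ 2) (q ^ 2) (n - i))) := by
    intro i hi
    rw [Finset.mem_range] at hi
    obtain ⟨k, rfl⟩ : ∃ k, n = i + k := ⟨n - i, by omega⟩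
    have e1 : i + (i + k - i) = i + k := by omega
    have e2 : i + k - i = k := by omega
    have hnn : i + k ≤ (i + k) * (i + k) := by nlinarith
    have e3 : i * i + 2 * i * k + 2 * k * k = (i + k) * (i + k) + k * k := by ring
    have e4 : i * i + 2 * i * k + 2 * k * k - (i + k) = ((i + k) * (i + k) - (i + k)) + k * k := by
      omega
    rw [e1, e2, e4, pow_add]
    ring
  rw [Finset.sum_congr rfl step1, ← Finset.mul_sum]
  have refl1 : ∑ i ∈ Finset.range (n + 1),
      ((-1 : ℂ) ^ i * q ^ ((n - i) * (n - i)) / (qPoch q q i * qPoch (q ^ 2) (q ^ 2) (n - i)))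
      = ∑ j ∈ Finset.range (n + 1),
      ((-1 : ℂ) ^ (n - j) * q ^ (j * j) / (qPoch q q (n - j) * qPoch (q ^ 2) (q ^ 2) j)) := by
    rw [← Finset.sum_range_reflect]
    apply Finset.sum_congr rfl
    intro j hj
    rw [Finset.mem_range] at hj
    have e1 : n + 1 - 1 - j = n - j := by omega
    have e2 : n - (n - j) = j := by omega
    rw [e1, e2]
  rw [refl1]
  have refl2 : ∑ j ∈ Finset.range (n + 1),
      ((-1 : ℂ) ^ (n - j) * q ^ (j * j) / (qPoch q q (n - j) * qPoch (q ^ 2) (q ^ 2) j))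
      = (-1 : ℂ) ^ n * ∑ j ∈ Finset.range (n + 1),
      ((-1 : ℂ) ^ j * q ^ (j * j) / (qPoch q q (n - j) * qPoch (q ^ 2) (q ^ 2) j)) := by
    rw [Finset.mul_sum]
    apply Finset.sum_congr rfl
    intro j hj
    rw [Finset.mem_range] at hj
    rw [neg_one_pow_sub (by omega : j ≤ n)]
    ring
  rw [refl2, T_eq hq n, eulc]
  ring


lemma sq_sub_succ (n : ℕ) : (n + 1) * (n + 1) - (n + 1) = (n * n - n) + 2 * n := by
  have h : n ≤ n * n := by nlinarith
  have h2 : (n + 1) * (n + 1) = n * n + 2 * n + 1 := by ring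
  omega

lemma summable_major {ρ t : ℝ} (hρ : 0 ≤ ρ) (ht0 : 0 ≤ t) (ht : t < 1) :
    Summable (fun n : ℕ => ((n : ℝ) + 1) * ρ ^ n * t ^ (n * n - n)) := by
  apply summable_of_ratio_norm_eventually_le (r := 1 / 2) (by norm_num)
  have htend : Filter.Tendsto (fun n : ℕ => ρ * (t ^ 2) ^ n) Filter.atTop (nhds 0) := by
    have := tendsto_pow_atTop_nhds_zero_of_lt_one (by positivity : (0:ℝ) ≤ t ^ 2)
      (by nlinarith : t ^ 2 < 1)
    simpa using this.const_mul ρ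
  filter_upwards [htend.eventually (gt_mem_nhds (by norm_num : (0:ℝ) < 1/4))] with n hn
  have hfn : (0:ℝ) ≤ ((n : ℝ) + 1) * ρ ^ n * t ^ (n * n - n) := by positivity
  rw [Real.norm_of_nonneg hfn, Real.norm_of_nonneg (by positivity)]
  have h1 : (0:ℝ) ≤ ρ ^ n * t ^ (n * n - n) := by positivity
  have main : ((n:ℝ) + 1 + 1) * ρ ^ (n+1) * t ^ ((n*n-n) + 2*n)
      ≤ 1/2 * (((n:ℝ)+1) * ρ ^ n * t ^ (n*n-n)) := by
    have hb : ρ * t ^ (2*n) < 1/4 := by rw [pow_mul]; exact hn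
    have e : ((n:ℝ)+1+1) * ρ^(n+1) * t^((n*n-n)+2*n)
        = (ρ^n * t^(n*n-n)) * (((n:ℝ)+1+1) * (ρ * t^(2*n))) := by
      rw [pow_add, pow_succ]; ring
    rw [e]
    have key : ((n:ℝ)+1+1) * (ρ * t^(2*n)) ≤ ((n:ℝ)+1) * (1/2) := by
      nlinarith [Nat.cast_nonneg (α := ℝ) n, mul_nonneg hρ (pow_nonneg ht0 (2*n))]
    calc (ρ^n * t^(n*n-n)) * (((n:ℝ)+1+1) * (ρ * t^(2*n)))
        ≤ (ρ^n * t^(n*n-n)) * (((n:ℝ)+1) * (1/2)) := mul_le_mul_of_nonneg_left key h1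
    _ = 1/2 * (((n:ℝ)+1) * ρ^n * t^(n*n-n)) := by ring
  rw [sq_sub_succ]
  push_cast
  exact main

lemma qPoch_norm_lower {q : ℂ} (hq : ‖q‖ < 1) (n : ℕ) :
    (1 - ‖q‖) ^ n ≤ ‖qPoch q q n‖ := by
  rw [qPoch, norm_prod]
  calc (1 - ‖q‖) ^ n = ∏ _k ∈ Finset.range n, (1 - ‖q‖) := by
        rw [Finset.prod_const, Finset.card_range]
  _ ≤ ∏ k ∈ Finset.range n, ‖1 - q * q ^ k‖ := by
      apply Finset.prod_le_prod
      · intro k _; linarith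
      · intro k _
        have h1 : ‖q * q ^ k‖ = ‖q‖ ^ (k + 1) := by
          rw [norm_mul, norm_pow, pow_succ]; ring
        have h2 : ‖q‖ ^ (k + 1) ≤ ‖q‖ := by
          calc ‖q‖ ^ (k + 1) ≤ ‖q‖ ^ 1 := pow_le_pow_of_le_one (norm_nonneg q) hq.le (by omega)
          _ = ‖q‖ := pow_one _
        calc 1 - ‖q‖ ≤ 1 - ‖q * q ^ k‖ := by rw [h1]; linarith
        _ = ‖(1 : ℂ)‖ - ‖q * q ^ k‖ := by rw [norm_one]
        _ ≤ ‖1 - q * q ^ k‖ := norm_sub_norm_le _ _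


noncomputable def Fterm (q u : ℂ) (p : ℕ × ℕ) : ℂ :=
  (-1 : ℂ) ^ p.1 * u ^ (p.1 + p.2) *
      q ^ (p.1 * p.1 + 2 * p.1 * p.2 + 2 * p.2 * p.2 - (p.1 + p.2)) /
    (qPoch q q p.1 * qPoch (q ^ 2) (q ^ 2) p.2)

lemma exp_identity (i j : ℕ) :
    i * i + 2 * i * j + 2 * j * j - (i + j) = ((i + j) * (i + j) - (i + j)) + j * j := by
  have h1 : i + j ≤ (i + j) * (i + j) := by nlinarith
  have h2 : i * i + 2 * i * j + 2 * j * j = (i + j) * (i + j) + j * j := by ring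
  omega

lemma term_norm_le {q : ℂ} (hq : ‖q‖ < 1) (u : ℂ) (i j : ℕ) :
    ‖Fterm q u (i, j)‖ ≤
      (‖u‖ / (1 - ‖q‖)) ^ (i + j) * ‖q‖ ^ ((i + j) * (i + j) - (i + j)) := by
  have ht0 : (0:ℝ) ≤ ‖q‖ := norm_nonneg q
  have htlt : (0:ℝ) < 1 - ‖q‖ := by linarith
  have hq2 := norm_sq_lt_one hq
  have hPi : (0:ℝ) < ‖qPoch q q i‖ := norm_pos_iff.mpr (qPoch_ne_zero hq i)
  have hRj : (0:ℝ) < ‖qPoch (q ^ 2) (q ^ 2) j‖ := norm_pos_iff.mpr (qPoch_ne_zero hq2 j)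
  have hnorm : ‖Fterm q u (i, j)‖ =
      ‖u‖ ^ (i + j) * ‖q‖ ^ (i * i + 2 * i * j + 2 * j * j - (i + j)) /
        (‖qPoch q q i‖ * ‖qPoch (q ^ 2) (q ^ 2) j‖) := by
    rw [Fterm, norm_div, norm_mul, norm_mul, norm_pow, norm_pow, norm_pow, norm_mul]
    norm_num
  rw [hnorm]
  have hden : (1 - ‖q‖) ^ (i + j) ≤ ‖qPoch q q i‖ * ‖qPoch (q ^ 2) (q ^ 2) j‖ := by
    have hR2 : (1 - ‖q‖) ^ j ≤ ‖qPoch (q ^ 2) (q ^ 2) j‖ := by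
      calc (1 - ‖q‖) ^ j ≤ (1 - ‖q ^ 2‖) ^ j := by
            apply pow_le_pow_left₀ htlt.le
            rw [norm_pow]
            nlinarith
      _ ≤ ‖qPoch (q ^ 2) (q ^ 2) j‖ := qPoch_norm_lower hq2 j
    calc (1 - ‖q‖) ^ (i + j) = (1 - ‖q‖) ^ i * (1 - ‖q‖) ^ j := pow_add _ _ _
    _ ≤ ‖qPoch q q i‖ * ‖qPoch (q ^ 2) (q ^ 2) j‖ :=
        mul_le_mul (qPoch_norm_lower hq i) hR2 (by positivity) hPi.le
  have hnum : ‖u‖ ^ (i + j) * ‖q‖ ^ (i * i + 2 * i * j + 2 * j * j - (i + j))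
      ≤ ‖u‖ ^ (i + j) * ‖q‖ ^ ((i + j) * (i + j) - (i + j)) := by
    apply mul_le_mul_of_nonneg_left _ (by positivity)
    apply pow_le_pow_of_le_one ht0 hq.le
    rw [exp_identity]; omega
  calc ‖u‖ ^ (i + j) * ‖q‖ ^ (i * i + 2 * i * j + 2 * j * j - (i + j)) /
        (‖qPoch q q i‖ * ‖qPoch (q ^ 2) (q ^ 2) j‖)
      ≤ ‖u‖ ^ (i + j) * ‖q‖ ^ ((i + j) * (i + j) - (i + j)) / (1 - ‖q‖) ^ (i + j) :=
        div_le_div₀ (by positivity) hnum (by positivity) hden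
  _ = (‖u‖ / (1 - ‖q‖)) ^ (i + j) * ‖q‖ ^ ((i + j) * (i + j) - (i + j)) := by
      rw [div_pow]; ring

lemma norm_sum_antidiag_le {q : ℂ} (hq : ‖q‖ < 1) (u : ℂ) (n : ℕ) :
    ∑ p ∈ Finset.HasAntidiagonal.antidiagonal n, ‖Fterm q u p‖
      ≤ ((n : ℝ) + 1) * (‖u‖ / (1 - ‖q‖)) ^ n * ‖q‖ ^ (n * n - n) := by
  calc ∑ p ∈ Finset.HasAntidiagonal.antidiagonal n, ‖Fterm q u p‖
      ≤ ∑ _p ∈ Finset.HasAntidiagonal.antidiagonal n, (‖u‖ / (1 - ‖q‖)) ^ n * ‖q‖ ^ (n * n - n) := by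
        apply Finset.sum_le_sum
        intro p hp
        rw [Finset.HasAntidiagonal.mem_antidiagonal] at hp
        have := term_norm_le hq u p.1 p.2
        rw [hp] at this
        simpa using this
  _ = ((n : ℝ) + 1) * (‖u‖ / (1 - ‖q‖)) ^ n * ‖q‖ ^ (n * n - n) := by
      rw [Finset.sum_const, Finset.Nat.card_antidiagonal]
      push_cast; ring

lemma summable_F {q : ℂ} (hq : ‖q‖ < 1) (u : ℂ) : Summable (Fterm q u) := by
  have htlt : (0:ℝ) < 1 - ‖q‖ := by linarith [hq]
  rw [← (Finset.HasAntidiagonal.sigmaAntidiagonalEquivProd (A := ℕ)).summable_iff]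
  apply Summable.of_norm
  apply (summable_sigma_of_nonneg (fun _ => norm_nonneg _)).2
  constructor
  · intro n; exact Summable.of_finite
  · apply Summable.of_nonneg_of_le (fun n => tsum_nonneg (fun _ => norm_nonneg _))
      (fun n => ?_)
      (summable_major (ρ := ‖u‖ / (1 - ‖q‖)) (by positivity) (norm_nonneg q) hq)
    rw [tsum_fintype]
    simp only [Function.comp]
    have : ∑ p : ↥(Finset.HasAntidiagonal.antidiagonal n),
        ‖Fterm q u ((Finset.HasAntidiagonal.sigmaAntidiagonalEquivProd (A := ℕ)) ⟨n, p⟩)‖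
        = ∑ p ∈ Finset.HasAntidiagonal.antidiagonal n, ‖Fterm q u p‖ := by
      rw [← Finset.sum_coe_sort (Finset.HasAntidiagonal.antidiagonal n) (fun p => ‖Fterm q u p‖)]
      rfl
    rw [this]
    exact norm_sum_antidiag_le hq u n

lemma tsum_F {q : ℂ} (hq : ‖q‖ < 1) (u : ℂ) :
    ∑' p : ℕ × ℕ, Fterm q u p = ∑' n : ℕ, eulc q n * u ^ n := by
  have hs := summable_F hq u
  have hssig : Summable (fun x : Σ n : ℕ, ↥(Finset.HasAntidiagonal.antidiagonal n) =>
      Fterm q u ((Finset.HasAntidiagonal.sigmaAntidiagonalEquivProd (A := ℕ)) x)) :=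
    (Finset.HasAntidiagonal.sigmaAntidiagonalEquivProd (A := ℕ)).summable_iff.mpr hs
  calc ∑' p : ℕ × ℕ, Fterm q u p
      = ∑' x : Σ n : ℕ, ↥(Finset.HasAntidiagonal.antidiagonal n),
          Fterm q u ((Finset.HasAntidiagonal.sigmaAntidiagonalEquivProd (A := ℕ)) x) :=
        ((Finset.HasAntidiagonal.sigmaAntidiagonalEquivProd (A := ℕ)).tsum_eq (Fterm q u)).symm
  _ = ∑' n : ℕ, ∑' p : ↥(Finset.HasAntidiagonal.antidiagonal n),
        Fterm q u ((Finset.HasAntidiagonal.sigmaAntidiagonalEquivProd (A := ℕ)) ⟨n, p⟩) := Summable.tsum_sigma' (fun _ => Summable.of_finite) hssig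
  _ = ∑' n : ℕ, eulc q n * u ^ n := by
      apply tsum_congr
      intro n
      rw [tsum_fintype]
      have : ∑ p : ↥(Finset.HasAntidiagonal.antidiagonal n),
          Fterm q u ((Finset.HasAntidiagonal.sigmaAntidiagonalEquivProd (A := ℕ)) ⟨n, p⟩)
          = ∑ p ∈ Finset.HasAntidiagonal.antidiagonal n, Fterm q u p := by
        rw [← Finset.sum_coe_sort (Finset.HasAntidiagonal.antidiagonal n) (fun p => Fterm q u p)]
        rfl
      rw [this]
      exact antidiag_sum hq u n

lemma summable_eulc {q : ℂ} (hq : ‖q‖ < 1) (u : ℂ) :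
    Summable (fun n : ℕ => eulc q n * u ^ n) := by
  have htlt : (0:ℝ) < 1 - ‖q‖ := by linarith [hq]
  have hq2 := norm_sq_lt_one hq
  apply Summable.of_norm
  apply Summable.of_nonneg_of_le (fun n => norm_nonneg _) (fun n => ?_)
    (summable_major (ρ := ‖u‖ / (1 - ‖q‖)) (by positivity) (norm_nonneg q) hq)
  have hRn : (0:ℝ) < ‖qPoch (q ^ 2) (q ^ 2) n‖ := norm_pos_iff.mpr (qPoch_ne_zero hq2 n)
  have hnorm : ‖eulc q n * u ^ n‖ = ‖q‖ ^ (n * n - n) * ‖u‖ ^ n / ‖qPoch (q ^ 2) (q ^ 2) n‖ := by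
    rw [eulc, norm_mul, norm_div, norm_mul, norm_pow, norm_pow, norm_pow]
    norm_num; ring
  rw [hnorm]
  have hden : (1 - ‖q‖) ^ n ≤ ‖qPoch (q ^ 2) (q ^ 2) n‖ := by
    calc (1 - ‖q‖) ^ n ≤ (1 - ‖q ^ 2‖) ^ n := by
          apply pow_le_pow_left₀ htlt.le
          rw [norm_pow]; nlinarith [norm_nonneg q]
    _ ≤ ‖qPoch (q ^ 2) (q ^ 2) n‖ := qPoch_norm_lower hq2 n
  calc ‖q‖ ^ (n * n - n) * ‖u‖ ^ n / ‖qPoch (q ^ 2) (q ^ 2) n‖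
      ≤ ‖q‖ ^ (n * n - n) * ‖u‖ ^ n / (1 - ‖q‖) ^ n :=
        div_le_div₀ (by positivity) le_rfl (by positivity) hden
  _ = 1 * (‖u‖ / (1 - ‖q‖)) ^ n * ‖q‖ ^ (n * n - n) := by rw [div_pow]; ring
  _ ≤ ((n:ℝ) + 1) * (‖u‖ / (1 - ‖q‖)) ^ n * ‖q‖ ^ (n * n - n) := by
      apply mul_le_mul_of_nonneg_right _ (by positivity)
      apply mul_le_mul_of_nonneg_right _ (by positivity)
      linarith [Nat.cast_nonneg (α := ℝ) n]


noncomputable def Feul (q u : ℂ) : ℂ := ∑' n : ℕ, eulc q n * u ^ n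

lemma eulc_zero (q : ℂ) : eulc q 0 = 1 := by simp [eulc, qPoch_zero]

lemma eulc_rec {q : ℂ} (hq : ‖q‖ < 1) (n : ℕ) :
    eulc q (n + 1) * (1 - (q ^ 2) ^ (n + 1)) = -(q ^ 2) ^ n * eulc q n := by
  have hq2 := norm_sq_lt_one hq
  have hRn : qPoch (q ^ 2) (q ^ 2) n ≠ 0 := qPoch_ne_zero hq2 n
  have hfac : (1 : ℂ) - q ^ 2 * (q ^ 2) ^ n ≠ 0 := by
    have := one_sub_qpow_ne_zero hq2 (k := n + 1) (by omega)
    intro hcon; apply this; rw [← hcon]; ring_nf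
  rw [eulc, eulc, qPoch_succ, sq_sub_succ]
  field_simp
  ring

lemma Feul_funceq {q : ℂ} (hq : ‖q‖ < 1) (u : ℂ) :
    Feul q u = (1 - u) * Feul q (q ^ 2 * u) := by
  have hs1 := summable_eulc hq u
  have hs2 := summable_eulc hq (q ^ 2 * u)
  have hs2' : Summable (fun n => (1 - u) * (eulc q n * (q ^ 2 * u) ^ n)) := hs2.mul_left _
  set G : ℕ → ℂ := fun n => (q ^ 2) ^ n * eulc q n * u ^ (n + 1) with hG
  have hGsum : ∀ N, ∑ n ∈ Finset.range (N + 1),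
      (eulc q n * u ^ n - (1 - u) * (eulc q n * (q ^ 2 * u) ^ n)) = G N := by
    intro N
    induction N with
    | zero => simp [hG, eulc_zero]
    | succ N ih =>
      rw [Finset.sum_range_succ, ih, hG]
      have hrec := eulc_rec hq N
      simp only []
      linear_combination (u ^ (N + 1)) * hrec
  have hGtend : Filter.Tendsto G Filter.atTop (nhds 0) := by
    have heq : G = fun n => u * (eulc q n * (q ^ 2 * u) ^ n) := by
      funext n; rw [hG]; ring
    rw [heq]
    have := hs2.tendsto_atTop_zero.const_mul u
    simpa using this
  have hsum0 : HasSum (fun n => eulc q n * u ^ n - (1 - u) * (eulc q n * (q ^ 2 * u) ^ n)) 0 := by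
    rw [Summable.hasSum_iff_tendsto_nat (hs1.sub hs2')]
    rw [← Filter.tendsto_add_atTop_iff_nat 1]
    exact hGtend.congr (fun N => (hGsum N).symm)
  have hdiff := hsum0.tsum_eq
  rw [Summable.tsum_sub hs1 hs2'] at hdiff
  have h2 : ∑' n, (1 - u) * (eulc q n * (q ^ 2 * u) ^ n)
      = (1 - u) * ∑' n, eulc q n * (q ^ 2 * u) ^ n := tsum_mul_left
  rw [h2] at hdiff
  rw [Feul, Feul]
  linear_combination hdiff

lemma Feul_iterate {q : ℂ} (hq : ‖q‖ < 1) (u : ℂ) (N : ℕ) :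
    Feul q u = qPoch u (q ^ 2) N * Feul q ((q ^ 2) ^ N * u) := by
  induction N with
  | zero => simp [qPoch_zero]
  | succ N ih =>
    rw [ih, Feul_funceq hq ((q ^ 2) ^ N * u), qPoch_succ]
    have e1 : q ^ 2 * ((q ^ 2) ^ N * u) = (q ^ 2) ^ (N + 1) * u := by ring
    rw [e1]
    ring

lemma hasProd_qPochInf {a Q : ℂ} (hQ : ‖Q‖ < 1) :
    HasProd (fun k : ℕ => 1 - a * Q ^ k) (qPochInf a Q) := by
  by_cases hzero : ∃ k : ℕ, 1 - a * Q ^ k = 0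
  · obtain ⟨k0, hk0⟩ := hzero
    have h0 : HasProd (fun k : ℕ => 1 - a * Q ^ k) 0 := by
      rw [HasProd]
      apply Filter.Tendsto.congr' _ tendsto_const_nhds
      rw [Filter.EventuallyEq, SummationFilter.unconditional_filter, Filter.eventually_atTop]
      exact ⟨{k0}, fun s hs =>
        (Finset.prod_eq_zero (hs (Finset.mem_singleton_self k0)) hk0).symm⟩
    have : qPochInf a Q = 0 := h0.tprod_eq
    rwa [this]
  · push_neg at hzero
    have hlog : Summable (fun k : ℕ => Complex.log (1 - a * Q ^ k)) := by
      refine Summable.of_norm_bounded_eventually_nat (g := fun k => 3 / 2 * (‖a‖ * ‖Q‖ ^ k)) ?_ ?_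
      · exact ((summable_geometric_of_lt_one (norm_nonneg Q) hQ).mul_left ‖a‖).mul_left _
      · have htend : Filter.Tendsto (fun k : ℕ => ‖a‖ * ‖Q‖ ^ k) Filter.atTop (nhds 0) := by
          have := tendsto_pow_atTop_nhds_zero_of_lt_one (norm_nonneg Q) hQ
          simpa using this.const_mul ‖a‖
        filter_upwards [htend.eventually_le_const (by norm_num : (0:ℝ) < 1/2)] with k hk
        have h1 : ‖-(a * Q ^ k)‖ ≤ 1 / 2 := by
          rw [norm_neg, norm_mul, norm_pow]; exact hk
        have h2 : (1 : ℂ) - a * Q ^ k = 1 + -(a * Q ^ k) := by ring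
        rw [h2]
        calc ‖Complex.log (1 + -(a * Q ^ k))‖ ≤ 3 / 2 * ‖-(a * Q ^ k)‖ :=
              Complex.norm_log_one_add_half_le_self h1
        _ = 3 / 2 * (‖a‖ * ‖Q‖ ^ k) := by rw [norm_neg, norm_mul, norm_pow]
    have hmul : Multipliable (fun k : ℕ => 1 - a * Q ^ k) := by
      have := Complex.multipliable_of_summable_log hlog
      exact this
    exact hmul.hasProd

lemma summable_eulc_succ_norm {q : ℂ} (hq : ‖q‖ < 1) :
    Summable (fun n : ℕ => ‖eulc q (n + 1)‖) := by
  have h1 : Summable (fun n : ℕ => eulc q n) := by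
    have := summable_eulc hq 1
    simpa using this
  have h2 : Summable (fun n : ℕ => ‖eulc q n‖) := h1.norm
  exact (summable_nat_add_iff 1).2 h2

lemma Feul_sub_one_bound {q : ℂ} (hq : ‖q‖ < 1) {v : ℂ} (hv : ‖v‖ ≤ 1) :
    ‖Feul q v - 1‖ ≤ ‖v‖ * ∑' n : ℕ, ‖eulc q (n + 1)‖ := by
  have hs := summable_eulc hq v
  have hshift : Summable (fun n : ℕ => eulc q (n + 1) * v ^ (n + 1)) :=
    (summable_nat_add_iff (f := fun n => eulc q n * v ^ n) 1).2 hs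
  have h0 : Feul q v - 1 = ∑' n : ℕ, eulc q (n + 1) * v ^ (n + 1) := by
    rw [Feul, Summable.tsum_eq_zero_add hs, eulc_zero]
    ring
  rw [h0]
  calc ‖∑' n : ℕ, eulc q (n + 1) * v ^ (n + 1)‖
      ≤ ∑' n : ℕ, ‖eulc q (n + 1) * v ^ (n + 1)‖ := norm_tsum_le_tsum_norm hshift.norm
  _ ≤ ∑' n : ℕ, ‖eulc q (n + 1)‖ * ‖v‖ := by
      apply Summable.tsum_le_tsum _ hshift.norm ((summable_eulc_succ_norm hq).mul_right ‖v‖)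
      intro n
      rw [norm_mul, norm_pow]
      apply mul_le_mul_of_nonneg_left _ (norm_nonneg _)
      calc ‖v‖ ^ (n + 1) ≤ ‖v‖ ^ 1 := pow_le_pow_of_le_one (norm_nonneg v) hv (by omega)
      _ = ‖v‖ := pow_one _
  _ = ‖v‖ * ∑' n : ℕ, ‖eulc q (n + 1)‖ := by rw [tsum_mul_right]; ring

lemma Feul_tendsto_one {q : ℂ} (hq : ‖q‖ < 1) (u : ℂ) :
    Filter.Tendsto (fun N : ℕ => Feul q ((q ^ 2) ^ N * u)) Filter.atTop (nhds 1) := by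
  have hq2 := norm_sq_lt_one hq
  set M := ∑' n : ℕ, ‖eulc q (n + 1)‖ with hM
  have hvN : Filter.Tendsto (fun N : ℕ => ‖(q ^ 2) ^ N * u‖) Filter.atTop (nhds 0) := by
    have := tendsto_pow_atTop_nhds_zero_of_lt_one (norm_nonneg (q ^ 2)) hq2
    have h2 := this.mul_const ‖u‖
    rw [zero_mul] at h2
    apply h2.congr (fun N => ?_)
    simp [norm_mul, norm_pow]
  have hsub : Filter.Tendsto (fun N : ℕ => Feul q ((q ^ 2) ^ N * u) - 1)
      Filter.atTop (nhds 0) := by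
    apply squeeze_zero_norm' (a := fun N => ‖(q ^ 2) ^ N * u‖ * M)
    · filter_upwards [hvN.eventually_le_const (by norm_num : (0:ℝ) < 1)] with N hN
      exact Feul_sub_one_bound hq hN
    · have := hvN.mul_const M
      rwa [zero_mul] at this
  have := hsub.add_const 1
  rw [zero_add] at this
  apply this.congr (fun N => by ring)

lemma euler_eq {q : ℂ} (hq : ‖q‖ < 1) (u : ℂ) :
    ∑' n : ℕ, eulc q n * u ^ n = qPochInf u (q ^ 2) := by
  have hq2 := norm_sq_lt_one hq
  have hprod : Filter.Tendsto (fun N : ℕ => qPoch u (q ^ 2) N) Filter.atTop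
      (nhds (qPochInf u (q ^ 2))) := by
    have := (hasProd_qPochInf (a := u) hq2).tendsto_prod_nat
    exact this
  have hmul : Filter.Tendsto (fun N : ℕ => qPoch u (q ^ 2) N * Feul q ((q ^ 2) ^ N * u))
      Filter.atTop (nhds (qPochInf u (q ^ 2) * 1)) := hprod.mul (Feul_tendsto_one hq u)
  have hconst : Filter.Tendsto (fun _ : ℕ => Feul q u) Filter.atTop (nhds (Feul q u)) :=
    tendsto_const_nhds
  have heq : (fun N : ℕ => qPoch u (q ^ 2) N * Feul q ((q ^ 2) ^ N * u))
      = fun _ : ℕ => Feul q u := by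
    funext N; exact (Feul_iterate hq u N).symm
  rw [heq] at hmul
  have := tendsto_nhds_unique hmul hconst
  rw [Feul] at this
  rw [← this, mul_one]

theorem stmt_9 (q u : ℂ) (hq : ‖q‖ < 1) :
    ∑' p : ℕ × ℕ,
      ((-1 : ℂ) ^ p.1 * u ^ (p.1 + p.2) *
          q ^ ((p.1 : ℤ) ^ 2 + 2 * p.1 * p.2 + 2 * (p.2 : ℤ) ^ 2 - p.1 - p.2)) /
        (qPoch q q p.1 * qPoch (q ^ 2) (q ^ 2) p.2)
      = qPochInf u (q ^ 2) := by
  have hterm : ∀ p : ℕ × ℕ,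
      ((-1 : ℂ) ^ p.1 * u ^ (p.1 + p.2) *
          q ^ ((p.1 : ℤ) ^ 2 + 2 * p.1 * p.2 + 2 * (p.2 : ℤ) ^ 2 - p.1 - p.2)) /
        (qPoch q q p.1 * qPoch (q ^ 2) (q ^ 2) p.2) = Fterm q u p := by
    rintro ⟨i, j⟩
    have hle : i + j ≤ i * i + 2 * i * j + 2 * j * j := by
      have h1 : i + j ≤ (i + j) * (i + j) := by nlinarith
      nlinarith [h1]
    have hcast : ((i : ℤ) ^ 2 + 2 * i * j + 2 * (j : ℤ) ^ 2 - i - j)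
        = ((i * i + 2 * i * j + 2 * j * j - (i + j) : ℕ) : ℤ) := by
      push_cast [Nat.cast_sub hle]
      ring
    rw [hcast, zpow_natCast]
    rfl
  calc ∑' p : ℕ × ℕ,
      ((-1 : ℂ) ^ p.1 * u ^ (p.1 + p.2) *
          q ^ ((p.1 : ℤ) ^ 2 + 2 * p.1 * p.2 + 2 * (p.2 : ℤ) ^ 2 - p.1 - p.2)) /
        (qPoch q q p.1 * qPoch (q ^ 2) (q ^ 2) p.2)
      = ∑' p : ℕ × ℕ, Fterm q u p := tsum_congr hterm
  _ = ∑' n : ℕ, eulc q n * u ^ n := tsum_F hq u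
  _ = qPochInf u (q ^ 2) := euler_eq hq u
end

section
/- For |q|<1 and any complex u, ∑_{i,j≥0} (-1)^i u^{i+2j} q^{i^2+2ij+2j^2-i-j} / ((q;q)_i (q^2;q^2)_j) = (u; q)_∞. -/
set_option maxHeartbeats 1000000

open scoped BigOperators

namespace Stmt10

lemma qPoch_succ (a q : ℂ) (n : ℕ) :
    qPoch a q (n + 1) = qPoch a q n * (1 - a * q ^ n) :=
  Finset.prod_range_succ _ _

lemma choose_two_cast (m : ℕ) : ((m.choose 2 : ℤ)) * 2 = m * (m - 1) := by
  induction m with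
  | zero => simp
  | succ n ih =>
      rw [Nat.choose_succ_succ n 1, Nat.choose_one_right]
      push_cast
      push_cast at ih
      linear_combination ih

lemma choose_succ_two (n : ℕ) : (n + 1).choose 2 = n.choose 2 + n := by
  have h := Nat.choose_succ_succ n 1
  norm_num at h
  omega

lemma choose_add_choose_eq (i j : ℕ) :
    ((i.choose 2 + (i + 2 * j).choose 2 : ℕ) : ℤ) =
      (i : ℤ) ^ 2 + 2 * i * j + 2 * (j : ℤ) ^ 2 - i - j := by
  have h1 := choose_two_cast i
  have h2 := choose_two_cast (i + 2 * j)
  push_cast at h1 h2 ⊢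
  nlinarith [h1, h2]

section Main

variable {q u : ℂ}

lemma norm_one_sub_ge (hq : ‖q‖ < 1) {w : ℂ} (h : ‖w‖ ≤ ‖q‖) :
    1 - ‖q‖ ≤ ‖1 - w‖ := by
  calc 1 - ‖q‖ ≤ 1 - ‖w‖ := by linarith
  _ = ‖(1 : ℂ)‖ - ‖w‖ := by rw [norm_one]
  _ ≤ ‖1 - w‖ := norm_sub_norm_le _ _

lemma norm_qPoch_ge (hq : ‖q‖ < 1) {a Q : ℂ} (h : ∀ k : ℕ, ‖a * Q ^ k‖ ≤ ‖q‖)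
    (n : ℕ) : (1 - ‖q‖) ^ n ≤ ‖qPoch a Q n‖ := by
  rw [qPoch, norm_prod]
  calc (1 - ‖q‖) ^ n = ∏ _k ∈ Finset.range n, (1 - ‖q‖) := by
        rw [Finset.prod_const, Finset.card_range]
  _ ≤ ∏ k ∈ Finset.range n, ‖1 - a * Q ^ k‖ :=
      Finset.prod_le_prod (fun k _ => by linarith) (fun k _ => norm_one_sub_ge hq (h k))


lemma norm_q_mul_pow_le (hq : ‖q‖ < 1) (k : ℕ) : ‖q * q ^ k‖ ≤ ‖q‖ := by
  rw [norm_mul, norm_pow]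
  calc ‖q‖ * ‖q‖ ^ k = ‖q‖ ^ (k + 1) := by ring
  _ ≤ ‖q‖ ^ 1 := pow_le_pow_of_le_one (norm_nonneg q) hq.le (by omega)
  _ = ‖q‖ := pow_one _


lemma norm_q2_mul_pow_le (hq : ‖q‖ < 1) (k : ℕ) : ‖q ^ 2 * (q ^ 2) ^ k‖ ≤ ‖q‖ := by
  rw [norm_mul, norm_pow, norm_pow, norm_pow]
  calc ‖q‖ ^ 2 * (‖q‖ ^ 2) ^ k = ‖q‖ ^ (2 * k + 2) := by ring
  _ ≤ ‖q‖ ^ 1 := pow_le_pow_of_le_one (norm_nonneg q) hq.le (by omega)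
  _ = ‖q‖ := pow_one _


lemma norm_qPoch_q (hq : ‖q‖ < 1) (n : ℕ) : (1 - ‖q‖) ^ n ≤ ‖qPoch q q n‖ :=
  norm_qPoch_ge hq (norm_q_mul_pow_le hq) n

lemma norm_qPoch_q2 (hq : ‖q‖ < 1) (n : ℕ) :
    (1 - ‖q‖) ^ n ≤ ‖qPoch (q ^ 2) (q ^ 2) n‖ :=
  norm_qPoch_ge hq (norm_q2_mul_pow_le hq) n

lemma qPoch_q_ne_zero (hq : ‖q‖ < 1) (n : ℕ) : qPoch q q n ≠ 0 := by
  intro h0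
  have hg := norm_qPoch_q hq n
  rw [h0, norm_zero] at hg
  have : (0 : ℝ) < (1 - ‖q‖) ^ n := pow_pos (by linarith) n
  linarith


lemma qPoch_q2_ne_zero (hq : ‖q‖ < 1) (n : ℕ) : qPoch (q ^ 2) (q ^ 2) n ≠ 0 := by
  intro h0
  have hg := norm_qPoch_q2 hq n
  rw [h0, norm_zero] at hg
  have : (0 : ℝ) < (1 - ‖q‖) ^ n := pow_pos (by linarith) n
  linarith


lemma one_sub_pow_ne (hq : ‖q‖ < 1) (n : ℕ) (hn : 1 ≤ n) : (1 : ℂ) - q ^ n ≠ 0 := by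
  intro h0
  have h1 : q ^ n = 1 := by linear_combination -h0
  have : ‖q ^ n‖ < 1 := by
    rw [norm_pow]
    calc ‖q‖ ^ n ≤ ‖q‖ ^ 1 := pow_le_pow_of_le_one (norm_nonneg q) hq.le hn
    _ < 1 := by rwa [pow_one]
  rw [h1, norm_one] at this
  exact lt_irrefl _ this


/-- `a_m = q^(C(m,2)) / (q;q)_m` for `m ≥ 0`, `0` for `m < 0`. -/
noncomputable def aa (q : ℂ) : ℤ → ℂ := fun m =>
  if 0 ≤ m then q ^ m.toNat.choose 2 / qPoch q q m.toNat else 0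

noncomputable def bb (q : ℂ) (j : ℕ) : ℂ := 1 / qPoch (q ^ 2) (q ^ 2) j

lemma aa_neg {m : ℤ} (h : m < 0) : aa q m = 0 := if_neg (not_le.2 h)

lemma aa_coe (i : ℕ) : aa q (i : ℤ) = q ^ i.choose 2 / qPoch q q i := by
  rw [aa]
  simp

lemma aa_rec (hq : ‖q‖ < 1) (hq0 : q ≠ 0) (m : ℤ) :
    (1 - q ^ m) * aa q m = q ^ (m - 1) * aa q (m - 1) := by
  rcases lt_trichotomy m 0 with h | h | h
  · rw [aa_neg h, aa_neg (by omega : m - 1 < 0), mul_zero, mul_zero]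
  · subst h
    rw [aa_neg (by omega : (0:ℤ) - 1 < 0), mul_zero, zpow_zero, sub_self, zero_mul]
  · obtain ⟨i, rfl⟩ : ∃ i : ℕ, m = (i : ℤ) + 1 := ⟨(m - 1).toNat, by omega⟩
    have e1 : (i : ℤ) + 1 - 1 = (i : ℤ) := by ring
    have e2 : ((i : ℤ) + 1) = ((i + 1 : ℕ) : ℤ) := by push_cast; ring
    rw [e1, e2, aa_coe, aa_coe, zpow_natCast, zpow_natCast, qPoch_succ,
      choose_succ_two, pow_add]
    have hP := qPoch_q_ne_zero hq i
    have hne : (1 : ℂ) - q * q ^ i ≠ 0 := by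
      have := one_sub_pow_ne hq (i + 1) (by omega)
      rwa [pow_succ, mul_comm (q ^ i) q] at this
    have hne' : (1 : ℂ) - q ^ i * q ≠ 0 := by rwa [mul_comm (q ^ i) q]
    field_simp
    ring


lemma aa_rec' (hq : ‖q‖ < 1) (hq0 : q ≠ 0) (m : ℤ) :
    q ^ m * aa q m + q ^ (m - 1) * aa q (m - 1) = aa q m := by
  linear_combination (-1 : ℂ) * aa_rec hq hq0 m

lemma bb_rec (hq : ‖q‖ < 1) (j : ℕ) :
    (1 - q ^ (2 * (j + 1))) * bb q (j + 1) = bb q j := by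
  rw [bb, bb, qPoch_succ]
  have e : q ^ 2 * (q ^ 2) ^ j = q ^ (2 * (j + 1)) := by ring
  rw [e]
  have h1 := qPoch_q2_ne_zero hq j
  have h2 : (1 : ℂ) - q ^ (2 * (j + 1)) ≠ 0 := one_sub_pow_ne hq _ (by omega)
  field_simp


noncomputable def ss (q : ℂ) (n : ℕ) : ℂ :=
  ∑ j ∈ Finset.range (n + 1), aa q ((n : ℤ) - 2 * j) * bb q j

lemma ss_rec (hq : ‖q‖ < 1) (hq0 : q ≠ 0) (n : ℕ) :
    (1 - q ^ ((n : ℤ) + 1)) * ss q (n + 1) = ss q n := by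
  have hterm : ∀ j : ℕ,
      (1 - q ^ ((n : ℤ) + 1)) * (aa q (((n + 1 : ℕ) : ℤ) - 2 * j) * bb q j)
        = q ^ ((n : ℤ) - 2 * j) * aa q ((n : ℤ) - 2 * j) * bb q j
          + q ^ ((n : ℤ) + 1 - 2 * j) * aa q ((n : ℤ) + 1 - 2 * j) *
              ((1 - q ^ (2 * j)) * bb q j) := by
    intro j
    have ec : (((n + 1 : ℕ) : ℤ) - 2 * j) = (n : ℤ) + 1 - 2 * j := by push_cast; ring
    rw [ec]
    have hsplit : q ^ ((n : ℤ) + 1) = q ^ ((n : ℤ) + 1 - 2 * j) * q ^ (2 * j) := by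
      rw [← zpow_natCast q (2 * j), ← zpow_add₀ hq0]
      congr 1
      push_cast
      ring
    have h1 := aa_rec hq hq0 ((n : ℤ) + 1 - 2 * j)
    rw [show ((n : ℤ) + 1 - 2 * j - 1) = (n : ℤ) - 2 * j by ring] at h1
    linear_combination bb q j * h1 - aa q ((n : ℤ) + 1 - 2 * j) * bb q j * hsplit
  rw [ss, Finset.mul_sum]
  rw [Finset.sum_congr rfl fun j _ => hterm j]
  rw [Finset.sum_add_distrib]
  have hfirst : ∑ j ∈ Finset.range (n + 1 + 1),
      q ^ ((n : ℤ) - 2 * j) * aa q ((n : ℤ) - 2 * j) * bb q j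
      = ∑ j ∈ Finset.range (n + 1),
          q ^ ((n : ℤ) - 2 * j) * aa q ((n : ℤ) - 2 * j) * bb q j := by
    rw [Finset.sum_range_succ]
    rw [aa_neg (by push_cast; omega : (n : ℤ) - 2 * (n + 1 : ℕ) < 0)]
    ring
  have hsecond : ∑ j ∈ Finset.range (n + 1 + 1),
      q ^ ((n : ℤ) + 1 - 2 * j) * aa q ((n : ℤ) + 1 - 2 * j) *
        ((1 - q ^ (2 * j)) * bb q j)
      = ∑ j ∈ Finset.range (n + 1),
          q ^ ((n : ℤ) - 2 * j - 1) * aa q ((n : ℤ) - 2 * j - 1) * bb q j := by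
    rw [Finset.sum_range_succ']
    have h0 : q ^ ((n : ℤ) + 1 - 2 * (0 : ℕ)) * aa q ((n : ℤ) + 1 - 2 * (0 : ℕ)) *
        ((1 - q ^ (2 * 0)) * bb q 0) = 0 := by
      norm_num
    rw [h0, add_zero]
    apply Finset.sum_congr rfl
    intro j _
    have e1 : ((n : ℤ) + 1 - 2 * ((j + 1 : ℕ) : ℤ)) = (n : ℤ) - 2 * j - 1 := by
      push_cast; ring
    rw [e1, bb_rec hq j]
  rw [hfirst, hsecond, ← Finset.sum_add_distrib]
  apply Finset.sum_congr rfl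
  intro j _
  have h2 := aa_rec' hq hq0 ((n : ℤ) - 2 * j)
  rw [show ((n : ℤ) - 2 * j - 1) = (n : ℤ) - 2 * j - 1 from rfl] at h2
  linear_combination bb q j * h2


lemma ss_val (hq : ‖q‖ < 1) (hq0 : q ≠ 0) (n : ℕ) :
    ss q n = 1 / qPoch q q n := by
  induction n with
  | zero =>
      rw [ss]
      simp [aa, bb, qPoch]
  | succ n ih =>
      have h := ss_rec hq hq0 n
      rw [ih] at h
      have hz : q ^ ((n : ℤ) + 1) = q ^ (n + 1 : ℕ) := by
        rw [← zpow_natCast]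
        norm_num
      rw [hz] at h
      have hne : (1 : ℂ) - q ^ (n + 1 : ℕ) ≠ 0 := one_sub_pow_ne hq _ (by omega)
      have hP := qPoch_q_ne_zero hq n
      have hP1 := qPoch_q_ne_zero hq (n + 1)
      rw [qPoch_succ] at hP1 ⊢
      have hq1 : (1:ℂ) - q * q ^ n ≠ 0 := by
        intro h0
        apply hne
        rw [← h0]
        ring_nf
      field_simp at h ⊢
      rw [show q ^ (n+1) = q * q ^ n by ring] at h
      linear_combination h


lemma summable_master {r C : ℝ} (hr0 : 0 ≤ r) (hr : r < 1) (hC : 0 ≤ C) :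
    Summable (fun n : ℕ => r ^ n.choose 2 * C ^ n) := by
  apply summable_of_ratio_norm_eventually_le (r := 1 / 2) (by norm_num)
  have h0 : Filter.Tendsto (fun n : ℕ => r ^ n * C) Filter.atTop (nhds 0) := by
    simpa using (tendsto_pow_atTop_nhds_zero_of_lt_one hr0 hr).mul_const C
  filter_upwards [h0.eventually_le_const (by norm_num : (0 : ℝ) < 1 / 2)] with n hn
  have hnn : (0 : ℝ) ≤ r ^ n.choose 2 * C ^ n := by positivity
  have hnn1 : (0 : ℝ) ≤ r ^ (n + 1).choose 2 * C ^ (n + 1) := by positivity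
  rw [Real.norm_eq_abs, Real.norm_eq_abs, abs_of_nonneg hnn, abs_of_nonneg hnn1]
  calc r ^ (n + 1).choose 2 * C ^ (n + 1)
      = (r ^ n * C) * (r ^ n.choose 2 * C ^ n) := by
        rw [choose_succ_two, pow_add, pow_succ]; ring
  _ ≤ 1 / 2 * (r ^ n.choose 2 * C ^ n) := mul_le_mul_of_nonneg_right hn hnn

/-- Euler series coefficients. -/
noncomputable def ee (q : ℂ) (n : ℕ) : ℂ := (-1) ^ n * q ^ n.choose 2 / qPoch q q n

lemma ee_zero : ee q 0 = 1 := by simp [ee, qPoch]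

lemma norm_ee_le (hq : ‖q‖ < 1) (n : ℕ) :
    ‖ee q n‖ ≤ ‖q‖ ^ n.choose 2 * ((1 - ‖q‖)⁻¹) ^ n := by
  rw [ee, norm_div, norm_mul, norm_pow, norm_pow, norm_neg, norm_one, one_pow, one_mul,
    div_eq_mul_inv, inv_pow]
  have hP := norm_qPoch_q hq n
  have hpos : (0 : ℝ) < (1 - ‖q‖) ^ n := pow_pos (by linarith) n
  exact mul_le_mul_of_nonneg_left (inv_anti₀ hpos hP) (by positivity)

lemma summable_ee_norm (hq : ‖q‖ < 1) (x : ℂ) :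
    Summable (fun n : ℕ => ‖ee q n * x ^ n‖) := by
  have hg : Summable (fun n : ℕ => ‖q‖ ^ n.choose 2 * ((1 - ‖q‖)⁻¹ * ‖x‖) ^ n) :=
    summable_master (norm_nonneg q) hq
      (mul_nonneg (inv_nonneg.2 (by linarith)) (norm_nonneg x))
  have hb : ∀ n : ℕ, ‖ee q n * x ^ n‖ ≤ ‖q‖ ^ n.choose 2 * ((1 - ‖q‖)⁻¹ * ‖x‖) ^ n := by
    intro n
    rw [norm_mul, norm_pow, mul_pow]
    calc ‖ee q n‖ * ‖x‖ ^ n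
        ≤ ‖q‖ ^ n.choose 2 * ((1 - ‖q‖)⁻¹) ^ n * ‖x‖ ^ n := by
          apply mul_le_mul_of_nonneg_right (norm_ee_le hq n) (by positivity)
    _ = ‖q‖ ^ n.choose 2 * (((1 - ‖q‖)⁻¹) ^ n * ‖x‖ ^ n) := by ring
  exact Summable.of_nonneg_of_le (fun n => norm_nonneg _) hb hg

lemma summable_ee (hq : ‖q‖ < 1) (x : ℂ) :
    Summable (fun n : ℕ => ee q n * x ^ n) :=
  (summable_ee_norm hq x).of_norm

noncomputable def phi (q x : ℂ) : ℂ := ∑' n : ℕ, ee q n * x ^ n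

lemma ee_rec (hq : ‖q‖ < 1) (n : ℕ) :
    ee q (n + 1) * (1 - q ^ (n + 1)) = -(q ^ n) * ee q n := by
  rw [ee, ee, qPoch_succ, choose_succ_two, pow_add, pow_succ]
  have hP := qPoch_q_ne_zero hq n
  have hne : (1 : ℂ) - q * q ^ n ≠ 0 := by
    have := one_sub_pow_ne hq (n + 1) (by omega)
    rwa [pow_succ, mul_comm (q ^ n) q] at this
  field_simp
  ring

lemma phi_rec (hq : ‖q‖ < 1) (x : ℂ) : phi q x = (1 - x) * phi q (x * q) := by
  have h1 := summable_ee hq x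
  have h2 := summable_ee hq (x * q)
  have hdiff : phi q x - phi q (x * q)
      = ∑' n : ℕ, (ee q n * x ^ n - ee q n * (x * q) ^ n) := (Summable.tsum_sub h1 h2).symm
  have hsum3 : Summable (fun n : ℕ => ee q n * x ^ n - ee q n * (x * q) ^ n) := h1.sub h2
  have hshift : ∑' n : ℕ, (ee q n * x ^ n - ee q n * (x * q) ^ n)
      = ∑' n : ℕ, -x * (ee q n * (x * q) ^ n) := by
    rw [Summable.tsum_eq_zero_add hsum3]
    simp only [pow_zero, mul_one, sub_self, zero_add]
    apply tsum_congr
    intro n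
    have hr := ee_rec hq n
    have : ee q (n + 1) * x ^ (n + 1) - ee q (n + 1) * (x * q) ^ (n + 1)
        = (ee q (n + 1) * (1 - q ^ (n + 1))) * x ^ (n + 1)
          + ee q (n + 1) * (x ^ (n + 1) * q ^ (n + 1) - (x * q) ^ (n + 1)) := by ring
    rw [this, hr]
    rw [mul_pow]
    ring
  rw [hshift] at hdiff
  rw [tsum_mul_left] at hdiff
  have : phi q x - phi q (x * q) = -x * phi q (x * q) := hdiff
  linear_combination this

lemma phi_iter (hq : ‖q‖ < 1) (N : ℕ) :
    phi q u = qPoch u q N * phi q (u * q ^ N) := by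
  induction N with
  | zero => simp [qPoch]
  | succ N ih =>
      rw [ih, phi_rec hq (u * q ^ N), qPoch_succ]
      rw [show u * q ^ N * q = u * q ^ (N + 1) by ring]
      ring

lemma phi_near_one (hq : ‖q‖ < 1) {x : ℂ} (hx : ‖x‖ ≤ 1) :
    ‖phi q x - 1‖ ≤ (∑' n : ℕ, ‖ee q (n + 1)‖) * ‖x‖ := by
  have hs := summable_ee hq x
  have hsn := summable_ee_norm hq x
  have hK : Summable (fun n : ℕ => ‖ee q n‖) := by
    have := summable_ee_norm hq 1
    simpa using this
  have hK1 : Summable (fun n : ℕ => ‖ee q (n + 1)‖) := by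
    exact (summable_nat_add_iff 1).mpr hK
  have hphi : phi q x = 1 + ∑' n : ℕ, ee q (n + 1) * x ^ (n + 1) := by
    rw [phi, Summable.tsum_eq_zero_add hs, ee_zero, pow_zero, mul_one]
  rw [hphi, add_sub_cancel_left]
  have hsn1 : Summable (fun n : ℕ => ‖ee q (n + 1) * x ^ (n + 1)‖) :=
    (summable_nat_add_iff 1).mpr hsn
  calc ‖∑' n : ℕ, ee q (n + 1) * x ^ (n + 1)‖
      ≤ ∑' n : ℕ, ‖ee q (n + 1) * x ^ (n + 1)‖ := norm_tsum_le_tsum_norm hsn1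
  _ ≤ ∑' n : ℕ, ‖ee q (n + 1)‖ * ‖x‖ := by
      apply Summable.tsum_le_tsum _ hsn1 (hK1.mul_right ‖x‖)
      intro n
      rw [norm_mul, norm_pow]
      apply mul_le_mul_of_nonneg_left _ (norm_nonneg _)
      exact pow_le_of_le_one (norm_nonneg x) hx (by omega)
  _ = (∑' n : ℕ, ‖ee q (n + 1)‖) * ‖x‖ := tsum_mul_right

lemma tendsto_phi_one (hq : ‖q‖ < 1) :
    Filter.Tendsto (fun N : ℕ => phi q (u * q ^ N)) Filter.atTop (nhds 1) := by
  rw [tendsto_iff_norm_sub_tendsto_zero]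
  set K := ∑' n : ℕ, ‖ee q (n + 1)‖ with hKdef
  have h0 : Filter.Tendsto (fun N : ℕ => ‖u‖ * ‖q‖ ^ N) Filter.atTop (nhds 0) := by
    simpa using (tendsto_pow_atTop_nhds_zero_of_lt_one (norm_nonneg q) hq).const_mul ‖u‖
  have hg : Filter.Tendsto (fun N : ℕ => K * (‖u‖ * ‖q‖ ^ N)) Filter.atTop (nhds 0) := by
    simpa using h0.const_mul K
  apply squeeze_zero' _ _ hg
  · exact Filter.Eventually.of_forall fun N => norm_nonneg _
  · filter_upwards [h0.eventually_le_const (by norm_num : (0:ℝ) < 1)] with N hN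
    have hxn : ‖u * q ^ N‖ ≤ 1 := by
      rw [norm_mul, norm_pow]; exact hN
    have := phi_near_one hq (q := q) hxn
    calc ‖phi q (u * q ^ N) - 1‖ ≤ K * ‖u * q ^ N‖ := this
    _ = K * (‖u‖ * ‖q‖ ^ N) := by rw [norm_mul, norm_pow]

lemma euler (hq : ‖q‖ < 1) : phi q u = qPochInf u q := by
  by_cases hzero : ∃ k : ℕ, 1 - u * q ^ k = 0
  · obtain ⟨k, hk⟩ := hzero
    have h1 : qPochInf u q = 0 := by
      have hp : HasProd (fun k : ℕ => 1 - u * q ^ k) 0 := by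
        rw [HasProd]
        have hev : ∀ᶠ s : Finset ℕ in Filter.atTop,
            ∏ i ∈ s, (1 - u * q ^ i) = 0 := by
          filter_upwards [Filter.eventually_ge_atTop ({k} : Finset ℕ)] with s hs
          exact Finset.prod_eq_zero (hs (Finset.mem_singleton_self k)) hk
        exact Filter.Tendsto.congr' (Filter.EventuallyEq.symm hev) tendsto_const_nhds
      exact hp.tprod_eq.symm ▸ rfl
    have h2 : phi q u = 0 := by
      rw [phi_iter hq (k + 1)]
      have : qPoch u q (k + 1) = 0 :=
        Finset.prod_eq_zero (Finset.self_mem_range_succ k) hk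
      rw [this, zero_mul]
    rw [h1, h2]
  · push_neg at hzero
    have hlog : Summable (fun n : ℕ => Complex.log (1 - u * q ^ n)) := by
      apply Summable.of_norm_bounded_eventually_nat
        (g := fun n => 2 * (‖u‖ * ‖q‖ ^ n))
        (((summable_geometric_of_lt_one (norm_nonneg q) hq).mul_left ‖u‖).mul_left 2)
      have h0 : Filter.Tendsto (fun N : ℕ => ‖u‖ * ‖q‖ ^ N) Filter.atTop (nhds 0) := by
        simpa using (tendsto_pow_atTop_nhds_zero_of_lt_one (norm_nonneg q) hq).const_mul ‖u‖
      filter_upwards [h0.eventually_le_const (by norm_num : (0:ℝ) < 1/2)] with n hn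
      have hz : ‖-(u * q ^ n)‖ ≤ 1 / 2 := by
        rw [norm_neg, norm_mul, norm_pow]; exact hn
      have hz1 : ‖-(u * q ^ n)‖ < 1 := lt_of_le_of_lt hz (by norm_num)
      have hb := Complex.norm_log_one_add_sub_self_le hz1
      have he : (1 : ℂ) + -(u * q ^ n) = 1 - u * q ^ n := by ring
      rw [he] at hb
      have : ‖Complex.log (1 - u * q ^ n)‖
          ≤ ‖Complex.log (1 - u * q ^ n) - -(u * q ^ n)‖ + ‖-(u * q ^ n)‖ := by
        calc ‖Complex.log (1 - u * q ^ n)‖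
            = ‖(Complex.log (1 - u * q ^ n) - -(u * q ^ n)) + -(u * q ^ n)‖ := by ring_nf
        _ ≤ _ := norm_add_le _ _
      have hinv : (1 - ‖-(u * q ^ n)‖)⁻¹ ≤ 2 := by
        rw [inv_le_comm₀ (by linarith) (by norm_num)]
        linarith
      have hsq : ‖-(u * q ^ n)‖ ^ 2 * (1 - ‖-(u * q ^ n)‖)⁻¹ / 2 ≤ ‖-(u * q ^ n)‖ := by
        have hzn : 0 ≤ ‖-(u * q ^ n)‖ := norm_nonneg _
        nlinarith [hz]
      have hfin : ‖Complex.log (1 - u * q ^ n)‖ ≤ 2 * ‖-(u * q ^ n)‖ := by nlinarith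
      calc ‖Complex.log (1 - u * q ^ n)‖ ≤ 2 * ‖-(u * q ^ n)‖ := hfin
      _ = 2 * (‖u‖ * ‖q‖ ^ n) := by rw [norm_neg, norm_mul, norm_pow]
    have hM : Multipliable (fun k : ℕ => 1 - u * q ^ k) := by
      exact Complex.multipliable_of_summable_log hlog
    have hprod : Filter.Tendsto (fun N : ℕ => qPoch u q N) Filter.atTop
        (nhds (qPochInf u q)) := hM.hasProd.tendsto_prod_nat
    have hmul : Filter.Tendsto (fun N : ℕ => qPoch u q N * phi q (u * q ^ N))
        Filter.atTop (nhds (qPochInf u q * 1)) := hprod.mul (tendsto_phi_one hq)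
    have hconst : Filter.Tendsto (fun _ : ℕ => phi q u) Filter.atTop (nhds (phi q u)) :=
      tendsto_const_nhds
    have : phi q u = qPochInf u q * 1 := by
      apply tendsto_nhds_unique hconst
      apply hmul.congr
      intro N
      exact (phi_iter hq N).symm
    rw [this, mul_one]

noncomputable def gg (q u : ℂ) (n : ℕ) : ℂ := (-1) ^ n * u ^ n * q ^ n.choose 2

lemma term_eq (hq : ‖q‖ < 1) (hq0 : q ≠ 0) (i j : ℕ) :
    ((-1 : ℂ) ^ i * u ^ (i + 2 * j) *
        q ^ ((i : ℤ) ^ 2 + 2 * i * j + 2 * (j : ℤ) ^ 2 - i - j)) /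
      (qPoch q q i * qPoch (q ^ 2) (q ^ 2) j)
    = gg q u (i + 2 * j) * (aa q (i : ℤ) * bb q j) := by
  have hexp : q ^ ((i : ℤ) ^ 2 + 2 * i * j + 2 * (j : ℤ) ^ 2 - i - j)
      = q ^ i.choose 2 * q ^ (i + 2 * j).choose 2 := by
    rw [← pow_add, ← zpow_natCast q (i.choose 2 + (i + 2 * j).choose 2)]
    rw [choose_add_choose_eq i j]
  have hsign : ((-1 : ℂ)) ^ i = (-1 : ℂ) ^ (i + 2 * j) := by
    rw [pow_add, pow_mul]
    norm_num
  rw [hexp, hsign, gg, aa_coe, bb]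
  have h1 := qPoch_q_ne_zero hq i
  have h2 := qPoch_q2_ne_zero hq j
  field_simp

lemma norm_gg (n : ℕ) : ‖gg q u n‖ = ‖u‖ ^ n * ‖q‖ ^ n.choose 2 := by
  rw [gg, norm_mul, norm_mul, norm_pow, norm_pow, norm_pow, norm_neg, norm_one,
    one_pow, one_mul]

lemma norm_aa_le (hq : ‖q‖ < 1) (i : ℕ) :
    ‖aa q (i : ℤ)‖ ≤ ‖q‖ ^ i.choose 2 * ((1 - ‖q‖)⁻¹) ^ i := by
  rw [aa_coe, norm_div, norm_pow, div_eq_mul_inv, inv_pow]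
  have hpos : (0 : ℝ) < (1 - ‖q‖) ^ i := pow_pos (by linarith) i
  exact mul_le_mul_of_nonneg_left (inv_anti₀ hpos (norm_qPoch_q hq i))
    (by positivity)

lemma norm_bb_le (hq : ‖q‖ < 1) (j : ℕ) :
    ‖bb q j‖ ≤ ((1 - ‖q‖)⁻¹) ^ j := by
  rw [bb, norm_div, norm_one, one_div, inv_pow]
  have hpos : (0 : ℝ) < (1 - ‖q‖) ^ j := pow_pos (by linarith) j
  exact inv_anti₀ hpos (norm_qPoch_q2 hq j)

lemma summable_F (hq : ‖q‖ < 1) :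
    Summable (fun p : ℕ × ℕ => gg q u (p.1 + 2 * p.2) * (aa q (p.1 : ℤ) * bb q p.2)) := by
  set r := ‖q‖ with hr
  set v := ‖u‖ with hv
  set w := (1 - r)⁻¹ with hw
  have hr0 : (0 : ℝ) ≤ r := norm_nonneg q
  have hw0 : (0 : ℝ) ≤ w := inv_nonneg.2 (by linarith)
  have hv0 : (0 : ℝ) ≤ v := norm_nonneg u
  have hA : Summable (fun i : ℕ => r ^ i.choose 2 * (v * w) ^ i) :=
    summable_master hr0 hq (by positivity)
  have hB : Summable (fun j : ℕ => r ^ j.choose 2 * (v ^ 2 * w) ^ j) :=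
    summable_master hr0 hq (by positivity)
  have hAB : Summable (fun p : ℕ × ℕ =>
      (r ^ p.1.choose 2 * (v * w) ^ p.1) * (r ^ p.2.choose 2 * (v ^ 2 * w) ^ p.2)) :=
    hA.mul_of_nonneg hB (fun i => by positivity) (fun j => by positivity)
  apply Summable.of_norm_bounded hAB
  rintro ⟨i, j⟩
  have hb1 : ‖gg q u (i + 2 * j) * (aa q (i : ℤ) * bb q j)‖
      = ‖gg q u (i + 2 * j)‖ * (‖aa q (i : ℤ)‖ * ‖bb q j‖) := by
    rw [norm_mul, norm_mul]
  rw [hb1, norm_gg]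
  calc v ^ (i + 2 * j) * r ^ (i + 2 * j).choose 2 * (‖aa q (i : ℤ)‖ * ‖bb q j‖)
      ≤ v ^ (i + 2 * j) * r ^ (i + 2 * j).choose 2
          * ((r ^ i.choose 2 * w ^ i) * w ^ j) := by
        apply mul_le_mul_of_nonneg_left _ (by positivity)
        exact mul_le_mul (norm_aa_le hq i) (norm_bb_le hq j) (norm_nonneg _)
          (by positivity)
  _ ≤ v ^ (i + 2 * j) * r ^ j.choose 2 * ((r ^ i.choose 2 * w ^ i) * w ^ j) := by
        apply mul_le_mul_of_nonneg_right _ (by positivity)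
        apply mul_le_mul_of_nonneg_left _ (by positivity)
        exact pow_le_pow_of_le_one hr0 hq.le (Nat.choose_le_choose 2 (by omega))
  _ = (r ^ i.choose 2 * (v * w) ^ i) * (r ^ j.choose 2 * (v ^ 2 * w) ^ j) := by
        ring

lemma inner_sum_eq (hq : ‖q‖ < 1) (n : ℕ) :
    ∑' j : ℕ, gg q u n * (aa q ((n : ℤ) - 2 * j) * bb q j) = gg q u n * ss q n := by
  have hvan : ∀ j ∉ Finset.range (n + 1),
      gg q u n * (aa q ((n : ℤ) - 2 * j) * bb q j) = 0 := by
    intro j hj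
    rw [Finset.mem_range, not_lt] at hj
    rw [aa_neg (by omega : (n : ℤ) - 2 * j < 0), zero_mul, mul_zero]
  rw [tsum_eq_sum hvan, ss, Finset.mul_sum]

theorem main_ne (hq : ‖q‖ < 1) (hq0 : q ≠ 0) :
    ∑' p : ℕ × ℕ,
      ((-1 : ℂ) ^ p.1 * u ^ (p.1 + 2 * p.2) *
          q ^ ((p.1 : ℤ) ^ 2 + 2 * p.1 * p.2 + 2 * (p.2 : ℤ) ^ 2 - p.1 - p.2)) /
        (qPoch q q p.1 * qPoch (q ^ 2) (q ^ 2) p.2)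
      = qPochInf u q := by
  set F : ℕ × ℕ → ℂ :=
    fun p => gg q u (p.1 + 2 * p.2) * (aa q (p.1 : ℤ) * bb q p.2) with hF
  set f : ℕ × ℕ → ℂ :=
    fun p => gg q u p.1 * (aa q ((p.1 : ℤ) - 2 * p.2) * bb q p.2) with hf
  set m : ℕ × ℕ → ℕ × ℕ := fun p => (p.1 + 2 * p.2, p.2) with hm
  have hinj : Function.Injective m := by
    rintro ⟨i, j⟩ ⟨i', j'⟩ h
    rw [hm, Prod.mk.injEq] at h
    obtain ⟨h1, h2⟩ := h
    subst h2
    have : i = i' := by omega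
    rw [this]
  have hsupp : ∀ p ∉ Set.range m, f p = 0 := by
    rintro ⟨n, j⟩ hp
    have hlt : n < 2 * j := by
      by_contra hcon
      push_neg at hcon
      exact hp ⟨(n - 2 * j, j), by rw [hm]; simp; omega⟩
    rw [hf]
    simp only
    rw [aa_neg (by omega : (n : ℤ) - 2 * j < 0), zero_mul, mul_zero]
  have hcomp : ∀ p : ℕ × ℕ, f (m p) = F p := by
    rintro ⟨i, j⟩
    rw [hf, hm, hF]
    simp only
    rw [show ((i + 2 * j : ℕ) : ℤ) - 2 * (j : ℤ) = (i : ℤ) by push_cast; ring]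
  have hFsum : Summable F := summable_F hq
  have hfsum : Summable f := by
    rw [← Function.Injective.summable_iff hinj hsupp]
    exact hFsum.congr fun p => (hcomp p).symm
  have step1 : ∀ p : ℕ × ℕ,
      ((-1 : ℂ) ^ p.1 * u ^ (p.1 + 2 * p.2) *
          q ^ ((p.1 : ℤ) ^ 2 + 2 * p.1 * p.2 + 2 * (p.2 : ℤ) ^ 2 - p.1 - p.2)) /
        (qPoch q q p.1 * qPoch (q ^ 2) (q ^ 2) p.2) = F p :=
    fun p => term_eq hq hq0 p.1 p.2
  rw [tsum_congr step1]
  have step2 : ∑' p : ℕ × ℕ, F p = ∑' p : ℕ × ℕ, f p := by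
    rw [← tsum_congr hcomp]
    exact Function.Injective.tsum_eq hinj (Function.support_subset_iff'.2 hsupp)
  rw [step2, Summable.tsum_prod' hfsum (fun n => hfsum.prod_factor n)]
  have step3 : ∀ n : ℕ, ∑' j : ℕ, f (n, j) = ee q n * u ^ n := by
    intro n
    rw [hf]
    simp only
    rw [inner_sum_eq hq n, ss_val hq hq0 n, gg, ee]
    ring
  rw [tsum_congr step3]
  exact euler hq

lemma main_zero (u : ℂ) :
    ∑' p : ℕ × ℕ,
      ((-1 : ℂ) ^ p.1 * u ^ (p.1 + 2 * p.2) *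
          (0 : ℂ) ^ ((p.1 : ℤ) ^ 2 + 2 * p.1 * p.2 + 2 * (p.2 : ℤ) ^ 2 - p.1 - p.2)) /
        (qPoch 0 0 p.1 * qPoch (0 ^ 2) (0 ^ 2) p.2)
      = qPochInf u 0 := by
  have hpoch : ∀ n : ℕ, qPoch (0 : ℂ) 0 n = 1 := by
    intro n
    rw [qPoch]
    apply Finset.prod_eq_one
    intro k _
    ring
  have hvan : ∀ p : ℕ × ℕ, p ∉ ({(0, 0), (1, 0)} : Finset (ℕ × ℕ)) →
      ((-1 : ℂ) ^ p.1 * u ^ (p.1 + 2 * p.2) *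
          (0 : ℂ) ^ ((p.1 : ℤ) ^ 2 + 2 * p.1 * p.2 + 2 * (p.2 : ℤ) ^ 2 - p.1 - p.2)) /
        (qPoch 0 0 p.1 * qPoch (0 ^ 2) (0 ^ 2) p.2) = 0 := by
    rintro ⟨i, j⟩ hp
    simp only [Finset.mem_insert, Finset.mem_singleton, Prod.mk.injEq, not_or, not_and] at hp
    have hE : (i : ℤ) ^ 2 + 2 * i * j + 2 * (j : ℤ) ^ 2 - i - j ≠ 0 := by
      have hi0 : (0 : ℤ) ≤ (i : ℤ) := Int.natCast_nonneg i
      have hj0 : (0 : ℤ) ≤ (j : ℤ) := Int.natCast_nonneg j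
      rcases Nat.lt_or_ge j 1 with hj | hj
      · interval_cases j
        · have hi0 : i ≠ 0 := fun h => hp.1 h rfl
          have hi1 : i ≠ 1 := fun h => hp.2 h rfl
          have hi : 2 ≤ i := by omega
          have : (2 : ℤ) ≤ (i : ℤ) := by exact_mod_cast hi
          nlinarith
      · have : (1 : ℤ) ≤ (j : ℤ) := by exact_mod_cast hj
        nlinarith
    rw [zero_zpow _ hE]
    simp
  rw [tsum_eq_sum hvan]
  have hrhs : qPochInf u 0 = 1 - u := by
    rw [qPochInf]
    rw [tprod_eq_prod (s := {0}) ?h]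
    · simp
    · intro k hk
      have : k ≠ 0 := by simpa using hk
      rw [zero_pow this]
      ring
  rw [hrhs]
  rw [Finset.sum_insert (by decide), Finset.sum_singleton]
  have h00 : ((0:ℂ)^2) = 0 := by norm_num
  norm_num [hpoch, h00]
  ring

end Main

end Stmt10

theorem stmt_10 (q u : ℂ) (hq : ‖q‖ < 1) :
    ∑' p : ℕ × ℕ,
      ((-1 : ℂ) ^ p.1 * u ^ (p.1 + 2 * p.2) *
          q ^ ((p.1 : ℤ) ^ 2 + 2 * p.1 * p.2 + 2 * (p.2 : ℤ) ^ 2 - p.1 - p.2)) /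
        (qPoch q q p.1 * qPoch (q ^ 2) (q ^ 2) p.2)
      = qPochInf u q := by
  by_cases hq0 : q = 0
  · subst hq0
    exact Stmt10.main_zero u
  · exact Stmt10.main_ne hq hq0
end
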